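/- arXiv:2011.11977 — 6 statements merged into one kernel-verified Lean document; each statement's English description precedes it below -/
import Mathlib

section
/- For every real-valued function f on M_L^N, the quadratic form of the weighted adjacency operator is controlled by the potential: |∑_{m ∈ M_L^N} ∑_{n ∈ M_L^N, n ∼ m} w(m,n) f(m) f(n)| ≤ 4J ∑_{m ∈ M_L^N} V(m) f(m)². Equivalently, as quadratic forms, −4J V_N ≤ A_N ≤ 4J V_N. -/
open scoped Classical

/-- The interaction potential `V(m) = ∑_{j=1}^{L-1}[J(m(j)+m(j+1)) − m(j)m(j+1)] + J(m(1)+m(L))`,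
where `J = twoJ/2`. Sites are labeled `1,…,L`. -/
noncomputable def potV (twoJ L : ℕ) (m : ℕ → ℕ) : ℝ :=
  (∑ j ∈ Finset.Icc 1 (L - 1),
      ((twoJ : ℝ) / 2 * ((m j : ℝ) + (m (j + 1) : ℝ)) - (m j : ℝ) * (m (j + 1) : ℝ)))
    + (twoJ : ℝ) / 2 * ((m 1 : ℝ) + (m L : ℝ))

/-- Adjacency of occupation functions: one particle hops between neighboring sites
`j₀, j₀+1` with `j₀ ∈ {1,…,L−1}`. -/
def adjC (L : ℕ) (m n : ℕ → ℕ) : Prop :=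
  ∃ j₀ ∈ Finset.Icc 1 (L - 1),
    (((m j₀ : ℤ) - (n j₀ : ℤ) = 1 ∧ (m (j₀ + 1) : ℤ) - (n (j₀ + 1) : ℤ) = -1) ∨
     ((m j₀ : ℤ) - (n j₀ : ℤ) = -1 ∧ (m (j₀ + 1) : ℤ) - (n (j₀ + 1) : ℤ) = 1)) ∧
    ∀ j, j ≠ j₀ → j ≠ j₀ + 1 → m j = n j

/-- The hopping weight `w(m,n) = ∏_{j : m(j) ≠ n(j)} (J(m(j)+n(j)+1) − m(j)n(j))^{1/2}`,
with `J = twoJ/2`. -/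
noncomputable def wt (twoJ L : ℕ) (m n : ℕ → ℕ) : ℝ :=
  ∏ j ∈ (Finset.Icc 1 L).filter (fun j => m j ≠ n j),
    Real.sqrt ((twoJ : ℝ) / 2 * ((m j : ℝ) + (n j : ℝ) + 1) - (m j : ℝ) * (n j : ℝ))

/-- A configuration `m : Λ_L → {0,…,2J}` extended to `ℕ → ℕ` (1-indexed, vanishing
outside `Λ_L = {1,…,L}`). -/
def extOcc (twoJ L : ℕ) (m : Fin L → Fin (twoJ + 1)) : ℕ → ℕ :=
  fun s => if h : 1 ≤ s ∧ s ≤ L then (m ⟨s - 1, by omega⟩ : ℕ) else 0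

/-- `M_L^N`: configurations with `N` particles in total. -/
noncomputable def MLN (twoJ L N : ℕ) : Finset (Fin L → Fin (twoJ + 1)) :=
  Finset.univ.filter (fun m => ∑ j, (m j : ℕ) = N)

noncomputable def bondOf (M N : ℕ → ℕ) : ℕ :=
  if h : ∃ j, M j ≠ N j then Nat.find h else 0

lemma bondOf_eq {M N : ℕ → ℕ} {j₀ : ℕ} (hne : M j₀ ≠ N j₀)
    (hoff : ∀ j, j ≠ j₀ → j ≠ j₀ + 1 → M j = N j) : bondOf M N = j₀ := by
  have hex : ∃ j, M j ≠ N j := ⟨j₀, hne⟩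
  rw [bondOf, dif_pos hex]
  have h1 := Nat.find_spec hex
  have h2 : Nat.find hex ≤ j₀ := Nat.find_min' hex hne
  by_contra hne2
  have : Nat.find hex = j₀ + 1 := by
    by_contra h3
    exact h1 (hoff _ hne2 h3)
  omega

lemma wt_filter_eq (twoJ L : ℕ) (hL : 2 ≤ L) {M N : ℕ → ℕ} {j₀ : ℕ}
    (hj : j₀ ∈ Finset.Icc 1 (L-1))
    (hne : M j₀ ≠ N j₀) (hne' : M (j₀+1) ≠ N (j₀+1))
    (hoff : ∀ j, j ≠ j₀ → j ≠ j₀ + 1 → M j = N j) :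
    (Finset.Icc 1 L).filter (fun j => M j ≠ N j) = {j₀, j₀ + 1} := by
  simp only [Finset.mem_Icc] at hj
  ext j
  simp only [Finset.mem_filter, Finset.mem_Icc, Finset.mem_insert, Finset.mem_singleton]
  constructor
  · rintro ⟨-, h⟩
    by_contra hc
    push_neg at hc
    exact h (hoff j hc.1 hc.2)
  · rintro (rfl | rfl)
    · exact ⟨⟨hj.1, by omega⟩, hne⟩
    · exact ⟨⟨by omega, by omega⟩, hne'⟩

noncomputable def Wfun (t : ℕ) (a b : ℝ) : ℝ :=
  Real.sqrt (a * ((t:ℝ) + 1 - a)) * Real.sqrt ((b + 1) * ((t:ℝ) - b))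

lemma wt_hop (twoJ L : ℕ) (hL : 2 ≤ L) {M N : ℕ → ℕ} {j₀ : ℕ}
    (hj : j₀ ∈ Finset.Icc 1 (L-1))
    (hc : ((M j₀ : ℤ) - (N j₀ : ℤ) = 1 ∧ (M (j₀ + 1) : ℤ) - (N (j₀ + 1) : ℤ) = -1) ∨
     ((M j₀ : ℤ) - (N j₀ : ℤ) = -1 ∧ (M (j₀ + 1) : ℤ) - (N (j₀ + 1) : ℤ) = 1))
    (hoff : ∀ j, j ≠ j₀ → j ≠ j₀ + 1 → M j = N j) :
    wt twoJ L M N = if N j₀ < M j₀ then Wfun twoJ (M j₀ : ℝ) (M (j₀+1) : ℝ)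
      else Wfun twoJ (M (j₀+1) : ℝ) (M j₀ : ℝ) := by
  have hne : M j₀ ≠ N j₀ := by rcases hc with ⟨h1,h2⟩|⟨h1,h2⟩ <;> omega
  have hne' : M (j₀+1) ≠ N (j₀+1) := by rcases hc with ⟨h1,h2⟩|⟨h1,h2⟩ <;> omega
  rw [wt, wt_filter_eq twoJ L hL hj hne hne' hoff, Finset.prod_pair (by omega)]
  rcases hc with ⟨h1,h2⟩|⟨h1,h2⟩
  · have hlt : N j₀ < M j₀ := by omega
    rw [if_pos hlt]
    have e1 : (N j₀ : ℝ) = (M j₀ : ℝ) - 1 := by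
      have : (N j₀ : ℤ) = (M j₀ : ℤ) - 1 := by omega
      exact_mod_cast this
    have e2 : (N (j₀+1) : ℝ) = (M (j₀+1) : ℝ) + 1 := by
      have : (N (j₀+1) : ℤ) = (M (j₀+1) : ℤ) + 1 := by omega
      exact_mod_cast this
    rw [e1, e2, Wfun]
    congr 1 <;> congr 1 <;> ring
  · have hlt : ¬ (N j₀ < M j₀) := by omega
    rw [if_neg hlt]
    have e1 : (N j₀ : ℝ) = (M j₀ : ℝ) + 1 := by
      have : (N j₀ : ℤ) = (M j₀ : ℤ) + 1 := by omega
      exact_mod_cast this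
    have e2 : (N (j₀+1) : ℝ) = (M (j₀+1) : ℝ) - 1 := by
      have : (N (j₀+1) : ℤ) = (M (j₀+1) : ℤ) - 1 := by omega
      exact_mod_cast this
    rw [e1, e2, Wfun]
    rw [mul_comm]
    congr 1 <;> congr 1 <;> ring

lemma extOcc_le (twoJ L : ℕ) (m : Fin L → Fin (twoJ + 1)) (s : ℕ) :
    extOcc twoJ L m s ≤ twoJ := by
  rw [extOcc]
  split
  · exact Fin.is_le _
  · exact Nat.zero_le _

lemma extOcc_apply (twoJ L : ℕ) (m : Fin L → Fin (twoJ + 1)) (i : Fin L) :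
    extOcc twoJ L m (i.val + 1) = m i := by
  rw [extOcc]
  have h : 1 ≤ i.val + 1 ∧ i.val + 1 ≤ L := ⟨by omega, i.isLt⟩
  rw [dif_pos h]
  simp

lemma sqrt_bound (t a b : ℕ) (ht : 1 ≤ t) (ha : a ≤ t) (hb : b ≤ t) :
    Real.sqrt ((a:ℝ) * ((t:ℝ) + 1 - (a:ℝ))) * Real.sqrt (((b:ℝ) + 1) * ((t:ℝ) - (b:ℝ))) ≤
      (t:ℝ) * (a:ℝ) * ((t:ℝ) - (b:ℝ)) := by
  have ha' : (a:ℝ) ≤ t := by exact_mod_cast ha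
  have hb' : (b:ℝ) ≤ t := by exact_mod_cast hb
  have ht' : (1:ℝ) ≤ t := by exact_mod_cast ht
  have hX : (0:ℝ) ≤ (a:ℝ) * ((t:ℝ) + 1 - a) := by
    apply mul_nonneg (Nat.cast_nonneg a); linarith
  have hC : (0:ℝ) ≤ (t:ℝ) * a * ((t:ℝ) - b) := by
    apply mul_nonneg (by positivity); linarith
  rw [← Real.sqrt_mul hX]
  have key : (a:ℝ) * ((t:ℝ) + 1 - a) * (((b:ℝ) + 1) * ((t:ℝ) - b)) ≤
      ((t:ℝ) * a * ((t:ℝ) - b)) ^ 2 := by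
    rcases Nat.eq_zero_or_pos a with h0 | hapos
    · subst h0; simp
    rcases eq_or_lt_of_le hb with h0 | hblt
    · subst h0; simp
    · have ha1 : (1:ℝ) ≤ a := by exact_mod_cast hapos
      have hb1 : (b:ℝ) + 1 ≤ t := by
        have h : b + 1 ≤ t := hblt
        exact_mod_cast h
      have htb : (1:ℝ) ≤ (t:ℝ) - b := by linarith
      have h1 : (t:ℝ) + 1 - a ≤ t := by linarith
      have hat : (0:ℝ) ≤ (a:ℝ) * ((t:ℝ) - b) := by nlinarith
      have h2 : ((t:ℝ) + 1 - a) * ((b:ℝ) + 1) ≤ (t:ℝ) * t :=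
        mul_le_mul h1 hb1 (by linarith) (by positivity)
      have h3 : (1:ℝ) ≤ (a:ℝ) * ((t:ℝ) - b) := by nlinarith
      nlinarith [mul_le_mul_of_nonneg_left h2 hat, mul_le_mul_of_nonneg_left h3 (mul_nonneg hat (by positivity : (0:ℝ) ≤ (t:ℝ)*t))]
  calc Real.sqrt ((a:ℝ) * ((t:ℝ) + 1 - a) * (((b:ℝ) + 1) * ((t:ℝ) - b)))
      ≤ Real.sqrt (((t:ℝ) * a * ((t:ℝ) - b)) ^ 2) := Real.sqrt_le_sqrt key
    _ = (t:ℝ) * a * ((t:ℝ) - b) := Real.sqrt_sq hC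

lemma Wfun_nonneg (t : ℕ) (a b : ℝ) : 0 ≤ Wfun t a b :=
  mul_nonneg (Real.sqrt_nonneg _) (Real.sqrt_nonneg _)

lemma Wfun_pair_bound (t a b : ℕ) (ht : 1 ≤ t) (ha : a ≤ t) (hb : b ≤ t) :
    Wfun t (a:ℝ) (b:ℝ) + Wfun t (b:ℝ) (a:ℝ) ≤
      2 * (t:ℝ) * ((t:ℝ)/2 * ((a:ℝ) + (b:ℝ)) - (a:ℝ) * (b:ℝ)) := by
  have h1 := sqrt_bound t a b ht ha hb
  have h2 := sqrt_bound t b a ht hb ha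
  rw [Wfun]
  rw [Wfun] at *
  nlinarith [h1, h2]

lemma key_bound (twoJ L N : ℕ) (h2J : 0 < twoJ) (hL : 2 ≤ L)
    (m : Fin L → Fin (twoJ + 1)) :
    ∑ n ∈ (MLN twoJ L N).filter (fun n => adjC L (extOcc twoJ L m) (extOcc twoJ L n)),
      wt twoJ L (extOcc twoJ L m) (extOcc twoJ L n)
      ≤ 2 * (twoJ : ℝ) * potV twoJ L (extOcc twoJ L m) := by
  set E := extOcc twoJ L with hE
  set S := (MLN twoJ L N).filter (fun n => adjC L (E m) (E n)) with hS
  set g : (Fin L → Fin (twoJ + 1)) → ℕ × Bool := fun n =>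
    (bondOf (E m) (E n), decide (E n (bondOf (E m) (E n)) < E m (bondOf (E m) (E n)))) with hg
  set W : ℕ × Bool → ℝ := fun p =>
    if p.2 then Wfun twoJ (E m p.1 : ℝ) (E m (p.1+1) : ℝ)
    else Wfun twoJ (E m (p.1+1) : ℝ) (E m p.1 : ℝ) with hW
  set P : Finset (ℕ × Bool) := (Finset.Icc 1 (L-1)) ×ˢ (Finset.univ : Finset Bool) with hP
  -- membership facts
  have hadj : ∀ n ∈ S, adjC L (E m) (E n) := by
    intro n hn
    exact (Finset.mem_filter.mp hn).2
  -- for each n ∈ S the weight equals W (g n), and g n ∈ P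
  have hwt : ∀ n ∈ S, wt twoJ L (E m) (E n) = W (g n) ∧ g n ∈ P := by
    intro n hn
    obtain ⟨j₀, hj, hc, hoff⟩ := hadj n hn
    have hne : E m j₀ ≠ E n j₀ := by rcases hc with ⟨h1,h2⟩|⟨h1,h2⟩ <;> omega
    have hb : bondOf (E m) (E n) = j₀ := bondOf_eq hne hoff
    constructor
    · rw [wt_hop twoJ L hL hj hc hoff, hg, hW]
      simp only [hb]
      by_cases hlt : E n j₀ < E m j₀ <;> simp [hlt]
    · rw [hP, hg]
      simp only [Finset.mem_product, hb]
      exact ⟨hj, Finset.mem_univ _⟩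
  -- injectivity of g on S
  have hinj : Set.InjOn g S := by
    intro n hn n' hn' hgnn
    obtain ⟨j₀, hj, hc, hoff⟩ := hadj n hn
    obtain ⟨j₁, hj1, hc1, hoff1⟩ := hadj n' hn'
    have hne : E m j₀ ≠ E n j₀ := by rcases hc with ⟨h1,h2⟩|⟨h1,h2⟩ <;> omega
    have hne1 : E m j₁ ≠ E n' j₁ := by rcases hc1 with ⟨h1,h2⟩|⟨h1,h2⟩ <;> omega
    have hb : bondOf (E m) (E n) = j₀ := bondOf_eq hne hoff
    have hb1 : bondOf (E m) (E n') = j₁ := bondOf_eq hne1 hoff1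
    have h1 : j₀ = j₁ := by
      have := congrArg Prod.fst hgnn
      simpa [hg, hb, hb1] using this
    subst h1
    have h2 : (E n j₀ < E m j₀) ↔ (E n' j₀ < E m j₀) := by
      have := congrArg Prod.snd hgnn
      simp only [hg, hb, hb1] at this
      exact decide_eq_decide.mp this
    have hEeq : ∀ j, E n j = E n' j := by
      intro j
      by_cases hj0 : j = j₀
      · subst hj0
        rcases hc with ⟨ha1,ha2⟩|⟨ha1,ha2⟩ <;> rcases hc1 with ⟨hb1',hb2'⟩|⟨hb1',hb2'⟩ <;> omega
      by_cases hj1' : j = j₀ + 1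
      · subst hj1'
        rcases hc with ⟨ha1,ha2⟩|⟨ha1,ha2⟩ <;> rcases hc1 with ⟨hb1',hb2'⟩|⟨hb1',hb2'⟩ <;> omega
      · rw [← hoff j hj0 hj1', hoff1 j hj0 hj1']
    funext i
    have := hEeq (i.val + 1)
    rw [hE] at this
    rw [extOcc_apply, extOcc_apply] at this
    exact Fin.ext this
  -- main chain
  have hWnn : ∀ p, 0 ≤ W p := by
    intro p
    rw [hW]
    dsimp only
    split <;> exact Wfun_nonneg _ _ _
  calc ∑ n ∈ S, wt twoJ L (E m) (E n)
      = ∑ n ∈ S, W (g n) := Finset.sum_congr rfl (fun n hn => (hwt n hn).1)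
    _ = ∑ p ∈ S.image g, W p := (Finset.sum_image (fun x hx y hy h => hinj hx hy h)).symm
    _ ≤ ∑ p ∈ P, W p := by
        apply Finset.sum_le_sum_of_subset_of_nonneg
        · intro p hp
          obtain ⟨n, hn, rfl⟩ := Finset.mem_image.mp hp
          exact (hwt n hn).2
        · intro p _ _
          exact hWnn p
    _ = ∑ j ∈ Finset.Icc 1 (L-1),
          (Wfun twoJ (E m j : ℝ) (E m (j+1) : ℝ) + Wfun twoJ (E m (j+1) : ℝ) (E m j : ℝ)) := by
        rw [hP, Finset.sum_product]
        apply Finset.sum_congr rfl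
        intro j _
        rw [Fintype.sum_bool]
        simp [hW]
    _ ≤ ∑ j ∈ Finset.Icc 1 (L-1),
          2 * (twoJ:ℝ) * ((twoJ:ℝ)/2 * ((E m j : ℝ) + (E m (j+1) : ℝ)) - (E m j : ℝ) * (E m (j+1) : ℝ)) := by
        apply Finset.sum_le_sum
        intro j _
        exact Wfun_pair_bound twoJ (E m j) (E m (j+1)) h2J (extOcc_le twoJ L m j) (extOcc_le twoJ L m (j+1))
    _ ≤ 2 * (twoJ:ℝ) * potV twoJ L (E m) := by
        rw [potV, mul_add, Finset.mul_sum]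
        apply le_add_of_nonneg_right
        positivity

lemma adjC_symm {L : ℕ} {M N : ℕ → ℕ} (h : adjC L M N) : adjC L N M := by
  obtain ⟨j₀, hj, hc, hoff⟩ := h
  refine ⟨j₀, hj, ?_, fun j h1 h2 => (hoff j h1 h2).symm⟩
  rcases hc with ⟨h1, h2⟩ | ⟨h1, h2⟩
  · exact Or.inr ⟨by omega, by omega⟩
  · exact Or.inl ⟨by omega, by omega⟩

lemma wt_symm (twoJ L : ℕ) (M N : ℕ → ℕ) : wt twoJ L M N = wt twoJ L N M := by
  rw [wt, wt]
  apply Finset.prod_congr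
  · apply Finset.filter_congr
    intro j _
    simp [ne_comm]
  · intro j _
    congr 1
    ring

lemma wt_nonneg (twoJ L : ℕ) (M N : ℕ → ℕ) : 0 ≤ wt twoJ L M N :=
  Finset.prod_nonneg (fun j _ => Real.sqrt_nonneg _)

/-- for every real-valued `f` on `M_L^N`,
`|∑_{m} ∑_{n ∼ m} w(m,n) f(m) f(n)| ≤ 4J ∑_m V(m) f(m)²`, i.e. `−4J V_N ≤ A_N ≤ 4J V_N`
as quadratic forms. -/
theorem adjacency_relative_bound (twoJ L N : ℕ) (h2J : 0 < twoJ) (hL : 2 ≤ L)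
    (hN : N ≤ twoJ * L) (f : (Fin L → Fin (twoJ + 1)) → ℝ) :
    |∑ m ∈ MLN twoJ L N,
        ∑ n ∈ (MLN twoJ L N).filter (fun n => adjC L (extOcc twoJ L m) (extOcc twoJ L n)),
          wt twoJ L (extOcc twoJ L m) (extOcc twoJ L n) * f m * f n|
      ≤ 2 * (twoJ : ℝ) * ∑ m ∈ MLN twoJ L N, potV twoJ L (extOcc twoJ L m) * (f m) ^ 2 := by
  set E := extOcc twoJ L with hE
  set A := MLN twoJ L N with hA
  -- step 1 : bound by symmetrized sum
  have step1 : |∑ m ∈ A, ∑ n ∈ A.filter (fun n => adjC L (E m) (E n)),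
        wt twoJ L (E m) (E n) * f m * f n|
      ≤ ∑ m ∈ A, ∑ n ∈ A.filter (fun n => adjC L (E m) (E n)),
        wt twoJ L (E m) (E n) * ((f m)^2 + (f n)^2) / 2 := by
    refine (Finset.abs_sum_le_sum_abs _ _).trans ?_
    apply Finset.sum_le_sum
    intro m _
    refine (Finset.abs_sum_le_sum_abs _ _).trans ?_
    apply Finset.sum_le_sum
    intro n _
    rw [abs_mul, abs_mul, abs_of_nonneg (wt_nonneg twoJ L (E m) (E n))]
    have h1 : |f m| * |f n| ≤ ((f m)^2 + (f n)^2) / 2 := by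
      nlinarith [sq_nonneg (|f m| - |f n|), sq_abs (f m), sq_abs (f n)]
    have h2 : 0 ≤ wt twoJ L (E m) (E n) := wt_nonneg twoJ L (E m) (E n)
    calc wt twoJ L (E m) (E n) * |f m| * |f n|
        = wt twoJ L (E m) (E n) * (|f m| * |f n|) := by ring
      _ ≤ wt twoJ L (E m) (E n) * (((f m)^2 + (f n)^2) / 2) :=
          mul_le_mul_of_nonneg_left h1 h2
      _ = wt twoJ L (E m) (E n) * ((f m)^2 + (f n)^2) / 2 := by ring
  -- swap lemma
  have swap : ∑ m ∈ A, ∑ n ∈ A.filter (fun n => adjC L (E m) (E n)),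
        wt twoJ L (E m) (E n) * (f n)^2
      = ∑ m ∈ A, ∑ n ∈ A.filter (fun n => adjC L (E m) (E n)),
        wt twoJ L (E m) (E n) * (f m)^2 := by
    calc ∑ m ∈ A, ∑ n ∈ A.filter (fun n => adjC L (E m) (E n)), wt twoJ L (E m) (E n) * (f n)^2
        = ∑ m ∈ A, ∑ n ∈ A, if adjC L (E m) (E n) then wt twoJ L (E m) (E n) * (f n)^2 else 0 := by
          apply Finset.sum_congr rfl; intro m _; rw [Finset.sum_filter]
      _ = ∑ n ∈ A, ∑ m ∈ A, if adjC L (E m) (E n) then wt twoJ L (E m) (E n) * (f n)^2 else 0 :=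
          Finset.sum_comm
      _ = ∑ m ∈ A, ∑ n ∈ A, if adjC L (E m) (E n) then wt twoJ L (E m) (E n) * (f m)^2 else 0 := by
          apply Finset.sum_congr rfl; intro m _
          apply Finset.sum_congr rfl; intro n _
          by_cases h : adjC L (E n) (E m)
          · rw [if_pos h, if_pos (adjC_symm h), wt_symm]
          · rw [if_neg h, if_neg (fun h' => h (adjC_symm h'))]
      _ = ∑ m ∈ A, ∑ n ∈ A.filter (fun n => adjC L (E m) (E n)), wt twoJ L (E m) (E n) * (f m)^2 := by
          apply Finset.sum_congr rfl; intro m _; rw [Finset.sum_filter]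
  refine step1.trans ?_
  have step2 : ∑ m ∈ A, ∑ n ∈ A.filter (fun n => adjC L (E m) (E n)),
        wt twoJ L (E m) (E n) * ((f m)^2 + (f n)^2) / 2
      = ∑ m ∈ A, (∑ n ∈ A.filter (fun n => adjC L (E m) (E n)), wt twoJ L (E m) (E n)) * (f m)^2 := by
    have expand : ∀ m n, wt twoJ L (E m) (E n) * ((f m)^2 + (f n)^2) / 2
        = wt twoJ L (E m) (E n) * (f m)^2 / 2 + wt twoJ L (E m) (E n) * (f n)^2 / 2 := by
      intro m n; ring
    calc ∑ m ∈ A, ∑ n ∈ A.filter (fun n => adjC L (E m) (E n)),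
          wt twoJ L (E m) (E n) * ((f m)^2 + (f n)^2) / 2
        = (∑ m ∈ A, ∑ n ∈ A.filter (fun n => adjC L (E m) (E n)), wt twoJ L (E m) (E n) * (f m)^2) / 2
          + (∑ m ∈ A, ∑ n ∈ A.filter (fun n => adjC L (E m) (E n)), wt twoJ L (E m) (E n) * (f n)^2) / 2 := by
          rw [Finset.sum_div, Finset.sum_div, ← Finset.sum_add_distrib]
          apply Finset.sum_congr rfl; intro m _
          rw [Finset.sum_div, Finset.sum_div, ← Finset.sum_add_distrib]
          apply Finset.sum_congr rfl; intro n _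
          ring
      _ = ∑ m ∈ A, ∑ n ∈ A.filter (fun n => adjC L (E m) (E n)), wt twoJ L (E m) (E n) * (f m)^2 := by
          rw [swap]; ring
      _ = ∑ m ∈ A, (∑ n ∈ A.filter (fun n => adjC L (E m) (E n)), wt twoJ L (E m) (E n)) * (f m)^2 := by
          apply Finset.sum_congr rfl; intro m _
          rw [Finset.sum_mul]
  rw [step2, Finset.mul_sum]
  apply Finset.sum_le_sum
  intro m _
  have hk := key_bound twoJ L N h2J hL m
  calc (∑ n ∈ A.filter (fun n => adjC L (E m) (E n)), wt twoJ L (E m) (E n)) * (f m)^2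
      ≤ (2 * (twoJ:ℝ) * potV twoJ L (E m)) * (f m)^2 :=
        mul_le_mul_of_nonneg_right hk (sq_nonneg _)
    _ = 2 * (twoJ:ℝ) * (potV twoJ L (E m) * (f m)^2) := by ring
end

section
/- Let N be an integer with 4J ≤ N ≤ 2JL. Then the minimum of the potential over all N-particle configurations equals 4J²: min{V(m) : m ∈ M_L^N} = 4J². -/
open Finset

/-- Membership in `M_L^N`: functions `Λ_L → {0,…,2J}` (vanishing outside `Λ_L = {1,…,L}`)
whose values sum to `N`. -/
def memMLN (twoJ L N : ℕ) (m : ℕ → ℕ) : Prop :=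
  (∀ j, m j ≤ twoJ) ∧ (∀ j, j ∉ Finset.Icc 1 L → m j = 0) ∧
    (∑ j ∈ Finset.Icc 1 L, m j) = N

lemma shift_sum (f : ℕ → ℕ) (a b : ℕ) :
    ∑ j ∈ Icc a b, f (j + 1) = ∑ j ∈ Icc (a+1) (b+1), f j := by
  rw [← Finset.map_add_right_Icc a b 1, Finset.sum_map]; rfl

lemma shift_sum_Ioc (f : ℕ → ℕ) (a b : ℕ) :
    ∑ j ∈ Ioc a b, f (j + 1) = ∑ j ∈ Ioc (a+1) (b+1), f j := by
  rw [← Finset.map_add_right_Ioc a b 1, Finset.sum_map]; rfl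

/-- The potential equals `c·N − ∑ m_j m_{j+1}`. -/
lemma potV_eq_sub (c L N : ℕ) (m : ℕ → ℕ) (hL : 1 ≤ L)
    (hsum : ∑ j ∈ Icc 1 L, m j = N) :
    potV c L m = (c:ℝ) * N - ∑ j ∈ Icc 1 (L-1), (m j : ℝ) * (m (j+1) : ℝ) := by
  obtain ⟨L', rfl⟩ : ∃ L', L = L' + 1 := ⟨L - 1, by omega⟩
  simp only [Nat.add_sub_cancel] at *
  have hA : (∑ j ∈ Icc 1 L', m j) + m (L' + 1) = N := by
    rw [Finset.sum_Icc_succ_top (by omega : 1 ≤ L' + 1) m] at hsum; exact hsum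
  have hB : (∑ j ∈ Icc 1 L', m (j + 1)) + m 1 = N := by
    rw [shift_sum]
    rw [show Icc 1 (L'+1) = Ioc 0 (L'+1) from (Finset.Icc_add_one_left_eq_Ioc 0 _)] at hsum
    rw [← Finset.sum_Ioc_consecutive m (by omega : (0:ℕ) ≤ 1) (by omega : 1 ≤ L'+1)] at hsum
    rw [show Ioc (0:ℕ) 1 = {1} from rfl, Finset.sum_singleton] at hsum
    rw [show Icc 2 (L'+1) = Ioc 1 (L'+1) from (Finset.Icc_add_one_left_eq_Ioc 1 _)]
    omega
  have hA' : (∑ j ∈ Icc 1 L', (m j : ℝ)) = (N : ℝ) - m (L' + 1) := by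
    have := congrArg (Nat.cast : ℕ → ℝ) hA; push_cast at this; linarith
  have hB' : (∑ j ∈ Icc 1 L', (m (j+1) : ℝ)) = (N : ℝ) - m 1 := by
    have := congrArg (Nat.cast : ℕ → ℝ) hB; push_cast at this; linarith
  unfold potV
  simp only [Nat.add_sub_cancel]
  rw [Finset.sum_sub_distrib]
  have : ∑ j ∈ Icc 1 L', (c:ℝ)/2 * ((m j : ℝ) + (m (j+1) : ℝ))
      = (c:ℝ)/2 * ((∑ j ∈ Icc 1 L', (m j : ℝ)) + ∑ j ∈ Icc 1 L', (m (j+1) : ℝ)) := by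
    rw [← Finset.sum_add_distrib, Finset.mul_sum]
  rw [this, hA', hB']
  ring

lemma arith_aux (M c W N : ℕ) (h1 : M ≤ c) (h2 : c ≤ W) (h3 : W + M = N) :
    M * W + c * c ≤ c * N := by
  subst h3
  obtain ⟨e, rfl⟩ : ∃ e, c = M + e := ⟨c - M, by omega⟩
  obtain ⟨f, rfl⟩ : ∃ f, W = (M + e) + f := ⟨W - (M+e), by omega⟩
  ring_nf
  nlinarith [Nat.mul_le_mul_right f (Nat.le_add_right M e)]

/-- The key lower bound: `∑ m_j m_{j+1} + c² ≤ c·N`. -/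
lemma key_ineq (c L N : ℕ) (m : ℕ → ℕ) (hL : 2 ≤ L) (hb : ∀ j, m j ≤ c)
    (hsum : ∑ j ∈ Icc 1 L, m j = N) (hN : 2 * c ≤ N) :
    (∑ j ∈ Icc 1 (L-1), m j * m (j+1)) + c * c ≤ c * N := by
  obtain ⟨j0, hj0mem, hj0max⟩ :=
    Finset.exists_max_image (Icc 1 L) m ⟨1, by simp; omega⟩
  simp only [Finset.mem_Icc] at hj0mem
  set M := m j0 with hM
  have hMc : M ≤ c := hb j0
  set w : ℕ → ℕ := fun j => if j < j0 then m j else m (j + 1) with hw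
  have hterm : ∀ j ∈ Icc 1 (L-1), m j * m (j+1) ≤ M * w j := by
    intro j hj
    simp only [Finset.mem_Icc] at hj
    by_cases h : j < j0
    · simp only [hw, if_pos h]
      have : m (j+1) ≤ M := hj0max (j+1) (Finset.mem_Icc.mpr ⟨by omega, by omega⟩)
      calc m j * m (j+1) ≤ m j * M := Nat.mul_le_mul_left _ this
        _ = M * m j := Nat.mul_comm _ _
    · simp only [hw, if_neg h]
      have : m j ≤ M := hj0max j (Finset.mem_Icc.mpr ⟨by omega, by omega⟩)
      exact Nat.mul_le_mul_right _ this
  have hS : (∑ j ∈ Icc 1 (L-1), m j * m (j+1)) ≤ M * ∑ j ∈ Icc 1 (L-1), w j := by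
    rw [Finset.mul_sum]
    exact Finset.sum_le_sum hterm
  have hsplitN : (∑ j ∈ Ioc 0 (j0-1), m j) + M + (∑ j ∈ Ioc j0 L, m j) = N := by
    rw [show Icc 1 L = Ioc 0 L from (Finset.Icc_add_one_left_eq_Ioc 0 _)] at hsum
    rw [← Finset.sum_Ioc_consecutive m (by omega : (0:ℕ) ≤ j0) (by omega : j0 ≤ L)] at hsum
    rw [← Finset.sum_Ioc_consecutive m (by omega : (0:ℕ) ≤ j0 - 1) (by omega : j0 - 1 ≤ j0)] at hsum
    have : Ioc (j0-1) j0 = {j0} := by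
      rw [← Finset.Icc_add_one_left_eq_Ioc, show j0 - 1 + 1 = j0 by omega, Finset.Icc_self]
    rw [this, Finset.sum_singleton] at hsum
    omega
  have hW : (∑ j ∈ Icc 1 (L-1), w j) + M = N := by
    rw [show Icc 1 (L-1) = Ioc 0 (L-1) from (Finset.Icc_add_one_left_eq_Ioc 0 _)]
    rw [← Finset.sum_Ioc_consecutive w (by omega : (0:ℕ) ≤ j0 - 1) (by omega : j0 - 1 ≤ L - 1)]
    have h1 : ∑ j ∈ Ioc 0 (j0-1), w j = ∑ j ∈ Ioc 0 (j0-1), m j :=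
      Finset.sum_congr rfl (fun j hj => by
        simp only [Finset.mem_Ioc] at hj; simp only [hw]; rw [if_pos (by omega)])
    have h2 : ∑ j ∈ Ioc (j0-1) (L-1), w j = ∑ j ∈ Ioc j0 L, m j := by
      have h2a : ∑ j ∈ Ioc (j0-1) (L-1), w j = ∑ j ∈ Ioc (j0-1) (L-1), m (j+1) :=
        Finset.sum_congr rfl (fun j hj => by
          simp only [Finset.mem_Ioc] at hj; simp only [hw]; rw [if_neg (by omega)])
      rw [h2a, shift_sum_Ioc, show j0 - 1 + 1 = j0 by omega, show L - 1 + 1 = L by omega]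
    rw [h1, h2]
    omega
  have hfin : M * (∑ j ∈ Icc 1 (L-1), w j) + c * c ≤ c * N :=
    arith_aux M c _ N hMc (by omega) hW
  omega

/-- Existence of a minimizing configuration. -/
lemma exists_min_config (c L N : ℕ) (hc : 0 < c) (hL : 2 ≤ L)
    (hN1 : 2 * c ≤ N) (hN2 : N ≤ c * L) :
    ∃ m : ℕ → ℕ, memMLN c L N m ∧
      (∑ j ∈ Icc 1 (L-1), m j * m (j+1)) + c * c = c * N := by
  set k := N / c with hk
  set r := N % c with hr
  have hkr : k * c + r = N := by rw [hk, hr, Nat.mul_comm]; exact Nat.div_add_mod N c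
  have hrc : r < c := Nat.mod_lt _ hc
  have hk2 : 2 ≤ k := by
    rw [hk, Nat.le_div_iff_mul_le hc]; omega
  have hkL : k ≤ L := by
    rw [hk]; calc N / c ≤ c * L / c := Nat.div_le_div_right hN2
      _ = L := Nat.mul_div_cancel_left L hc
  have hkLr : k = L → r = 0 := by
    intro h
    rw [h, Nat.mul_comm] at hkr
    exact Nat.le_antisymm (by linarith) (Nat.zero_le r)
  set m : ℕ → ℕ := fun j => if 1 ≤ j ∧ j ≤ k then c else if j = k + 1 then r else 0 with hm
  have hmval : ∀ j, 1 ≤ j → j ≤ k → m j = c := by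
    intro j h1 h2; rw [hm]; dsimp only; rw [if_pos ⟨h1, h2⟩]
  have hmval2 : m (k+1) = r := by
    rw [hm]; dsimp only; rw [if_neg (by omega), if_pos rfl]
  have hmval3 : ∀ j, k + 1 < j → m j = 0 := by
    intro j h1; rw [hm]; dsimp only; rw [if_neg (by omega), if_neg (by omega)]
  have hblock : ∀ a b : ℕ, a ≤ b → b ≤ k → (∑ j ∈ Ioc a b, m j) = (b - a) * c := by
    intro a b hab hbk
    rw [Finset.sum_congr rfl (fun j hj => by
      simp only [Finset.mem_Ioc] at hj
      exact hmval j (by omega) (by omega))]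
    rw [Finset.sum_const, Nat.card_Ioc, smul_eq_mul]
  have htail : ∀ a : ℕ, k ≤ a → (∑ j ∈ Ioc a L, m j) = if a = k then r else 0 := by
    intro a ha
    by_cases hal : a < L
    · by_cases hak : a = k
      · rw [if_pos hak, hak]
        rw [Finset.sum_eq_single_of_mem (k+1) (Finset.mem_Ioc.mpr ⟨by omega, by omega⟩)]
        · exact hmval2
        · intro b hb hne
          simp only [Finset.mem_Ioc] at hb
          exact hmval3 b (by omega)
      · rw [if_neg hak]
        apply Finset.sum_eq_zero
        intro b hb; simp only [Finset.mem_Ioc] at hb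
        exact hmval3 b (by omega)
    · have : Ioc a L = ∅ := Finset.Ioc_eq_empty (by omega)
      rw [this, Finset.sum_empty]
      split
      · next h => subst h; exact (hkLr (by omega)).symm
      · rfl
  have hsumN : (∑ j ∈ Icc 1 L, m j) = N := by
    rw [show Icc 1 L = Ioc 0 L from (Finset.Icc_add_one_left_eq_Ioc 0 _)]
    rw [← Finset.sum_Ioc_consecutive m (Nat.zero_le k) hkL]
    rw [hblock 0 k (Nat.zero_le k) (le_refl k), htail k (le_refl k), if_pos rfl]
    simp only [Nat.sub_zero]
    omega
  refine ⟨m, ⟨?_, ?_, hsumN⟩, ?_⟩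
  · intro j; rw [hm]; dsimp only
    split
    · exact le_refl c
    · split <;> omega
  · intro j hj; simp only [Finset.mem_Icc] at hj
    rw [hm]; dsimp only
    rw [if_neg (by omega)]
    by_cases h : j = k + 1
    · rw [if_pos h]; exact hkLr (by omega)
    · rw [if_neg h]
  · have hstep : ∀ j ∈ Ioc 0 (k-1), m j * m (j+1) = c * c := by
      intro j hj; simp only [Finset.mem_Ioc] at hj
      rw [hmval j (by omega) (by omega), hmval (j+1) (by omega) (by omega)]
    have h1 : (∑ j ∈ Ioc 0 (k-1), m j * m (j+1)) = (k-1) * (c * c) := by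
      rw [Finset.sum_congr rfl hstep, Finset.sum_const, Nat.card_Ioc, smul_eq_mul,
        Nat.sub_zero]
    have h2 : (∑ j ∈ Ioc (k-1) (L-1), m j * m (j+1)) = c * r := by
      by_cases hkl : k ≤ L - 1
      · rw [Finset.sum_eq_single_of_mem k (Finset.mem_Ioc.mpr ⟨by omega, hkl⟩)]
        · rw [hmval k (by omega) (le_refl k), hmval2]
        · intro b hb hne
          simp only [Finset.mem_Ioc] at hb
          rw [hmval3 (b+1) (by omega), Nat.mul_zero]
      · have hkL' : k = L := by omega
        have hr0 : r = 0 := hkLr hkL'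
        have : Ioc (k-1) (L-1) = ∅ := Finset.Ioc_eq_empty (by omega)
        rw [this, Finset.sum_empty, hr0, Nat.mul_zero]
    rw [show Icc 1 (L-1) = Ioc 0 (L-1) from (Finset.Icc_add_one_left_eq_Ioc 0 _)]
    rw [← Finset.sum_Ioc_consecutive _ (by omega : (0:ℕ) ≤ k - 1) (by omega : k - 1 ≤ L - 1)]
    rw [h1, h2]
    have e1 : k = (k-1) + 1 := by omega
    calc (k-1) * (c*c) + c * r + c * c = c * (((k-1)+1) * c + r) := by ring
      _ = c * (k * c + r) := by rw [← e1]
      _ = c * N := by rw [hkr]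

/-- for `4J ≤ N ≤ 2JL` the minimum of the potential over `M_L^N`
equals `4J² = (2J)²`. -/
theorem min_potential_eq (twoJ L N : ℕ) (h2J : 0 < twoJ) (hL : 2 ≤ L)
    (hN1 : 2 * twoJ ≤ N) (hN2 : N ≤ twoJ * L) :
    IsLeast ((fun m => potV twoJ L m) '' {m | memMLN twoJ L N m}) ((twoJ : ℝ) ^ 2) := by
  constructor
  · obtain ⟨m, hmem, hEq⟩ := exists_min_config twoJ L N h2J hL hN1 hN2
    refine ⟨m, hmem, ?_⟩
    have hEq' := congrArg (Nat.cast : ℕ → ℝ) hEq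
    push_cast at hEq'
    simp only
    rw [potV_eq_sub twoJ L N m (by omega) hmem.2.2]
    nlinarith [hEq']
  · rintro x ⟨m, hmem, rfl⟩
    have hkey := key_ineq twoJ L N m hL hmem.1 hmem.2.2 hN1
    have hkey' := (Nat.cast_le (α := ℝ)).mpr hkey
    push_cast at hkey'
    simp only
    rw [potV_eq_sub twoJ L N m (by omega) hmem.2.2]
    nlinarith [hkey']
end

section
/- For any two configurations X = (x_1,…,x_N) and Y = (y_1,…,y_N) in S_L^N, the graph distance between X and Y in the configuration graph equals ∑_{i=1}^{N} |x_i − y_i|; in particular any two configurations in S_L^N are connected by a path in the configuration graph. -/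
open scoped Classical

/-- The occupation function `m_X : {1,…,L} → ℕ` of a tuple `X` with values in `Fin L`
(site `j ∈ {1,…,L}` corresponds to `⟨j-1⟩ : Fin L`): `m_X(j) = #{i : x_i = j}`. -/
noncomputable def occt {L N : ℕ} (X : Fin N → Fin L) : ℕ → ℕ :=
  fun s => (Finset.univ.filter (fun i => (X i : ℕ) + 1 = s)).card

/-- `X ∈ S_L^N`: nondecreasing and no site occupied by more than `2J` particles
(`x_{k+2J} − x_k ≥ 1`). -/
def isConf (twoJ : ℕ) {L N : ℕ} (X : Fin N → Fin L) : Prop :=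
  Monotone X ∧ ∀ (k : ℕ) (hk : k < N) (h : k + twoJ < N),
    (X ⟨k, hk⟩ : ℕ) + 1 ≤ (X ⟨k + twoJ, h⟩ : ℕ)

/-- The set `S_L^N` as a finset. -/
noncomputable def confs (twoJ L N : ℕ) : Finset (Fin N → Fin L) :=
  Finset.univ.filter (fun X => isConf twoJ X)

/-- `d^N(X,Y) = ∑ᵢ |xᵢ − yᵢ|`. -/
def tdist {L N : ℕ} (X Y : Fin N → Fin L) : ℕ :=
  ∑ i, (((X i : ℕ) : ℤ) - ((Y i : ℕ) : ℤ)).natAbs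

/-- The configuration graph on `S_L^N`, with edges given by single-particle hops. -/
def confGraph (twoJ L N : ℕ) : SimpleGraph {X : Fin N → Fin L // X ∈ confs twoJ L N} where
  Adj X Y := adjC L (occt X.1) (occt Y.1)
  symm := by
    constructor
    rintro X Y ⟨j₀, hj, hc, hr⟩
    exact ⟨j₀, hj, by omega, fun j h1 h2 => (hr j h1 h2).symm⟩
  loopless := by
    constructor
    rintro X ⟨j₀, hj, hc, hr⟩
    omega

noncomputable def occ {L N : ℕ} (X : Fin N → Fin L) (v : Fin L) : ℕ :=
  (Finset.univ.filter (fun i => X i = v)).card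

lemma occ_le_of_conf {twoJ L N : ℕ} {X : Fin N → Fin L} (hX : isConf twoJ X) (v : Fin L) :
    occ X v ≤ twoJ := by
  by_contra h
  push_neg at h
  obtain ⟨hm, hs⟩ := hX
  set S := Finset.univ.filter (fun i => X i = v) with hSdef
  have hcs : twoJ < S.card := h
  have hne : S.Nonempty := Finset.card_pos.mp (by omega)
  obtain ⟨a, ha, hamin⟩ := S.exists_min_image id hne
  obtain ⟨b, hb, hbmax⟩ := S.exists_max_image id hne
  have hsub : S ⊆ Finset.Icc a b := fun x hx => Finset.mem_Icc.mpr ⟨hamin x hx, hbmax x hx⟩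
  have hcard : twoJ + 1 ≤ (Finset.Icc a b).card := le_trans (by omega) (Finset.card_le_card hsub)
  rw [Fin.card_Icc] at hcard
  have hab : (a : ℕ) + twoJ ≤ (b : ℕ) := by omega
  have hkN : (a : ℕ) + twoJ < N := lt_of_le_of_lt hab b.isLt
  have h1 : X ⟨(a : ℕ), a.isLt⟩ = v := by simpa [hSdef] using ha
  have h2 : X b = v := by simpa [hSdef] using hb
  have h3 := hs a a.isLt hkN
  have hle1 : X ⟨(a : ℕ), a.isLt⟩ ≤ X ⟨(a:ℕ) + twoJ, hkN⟩ := hm (by simp [Fin.le_def])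
  have hle2 : X ⟨(a:ℕ) + twoJ, hkN⟩ ≤ X b := hm (by simpa [Fin.le_def] using hab)
  rw [h1] at hle1
  rw [h2] at hle2
  have := le_antisymm hle2 hle1
  rw [this, h1] at h3
  omega

lemma conf_of_occ {twoJ L N : ℕ} {X : Fin N → Fin L} (hm : Monotone X)
    (h : ∀ v, occ X v ≤ twoJ) : isConf twoJ X := by
  refine ⟨hm, fun k hk h' => ?_⟩
  by_contra hx
  push_neg at hx
  have heq : X ⟨k + twoJ, h'⟩ = X ⟨k, hk⟩ := by
    have : X ⟨k, hk⟩ ≤ X ⟨k + twoJ, h'⟩ := hm (by simp [Fin.le_def])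
    rw [Fin.le_def] at this
    exact Fin.ext (by omega)
  have hsub : Finset.Icc (⟨k, hk⟩ : Fin N) ⟨k + twoJ, h'⟩ ⊆
      Finset.univ.filter (fun i => X i = X ⟨k, hk⟩) := by
    intro x hx'
    rw [Finset.mem_Icc] at hx'
    refine Finset.mem_filter.mpr ⟨Finset.mem_univ _, le_antisymm ?_ (hm hx'.1)⟩
    calc X x ≤ X ⟨k + twoJ, h'⟩ := hm hx'.2
      _ = X ⟨k, hk⟩ := heq
  have := Finset.card_le_card hsub
  rw [Fin.card_Icc] at this
  have h2 := h (X ⟨k, hk⟩)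
  unfold occ at h2
  simp at this
  omega

noncomputable def cum {L N : ℕ} (X : Fin N → Fin L) (s : ℕ) : ℕ :=
  (Finset.univ.filter (fun i => (X i : ℕ) + 1 ≤ s)).card

lemma cum_eq_sum_occt {L N : ℕ} (X : Fin N → Fin L) (s : ℕ) :
    cum X s = ∑ t ∈ Finset.Icc 1 s, occt X t := by
  unfold cum occt
  rw [Finset.card_eq_sum_card_fiberwise (f := fun i => (X i : ℕ) + 1) (t := Finset.Icc 1 s)
    (fun i hi => Finset.mem_Icc.mpr ⟨Nat.succ_le_succ (Nat.zero_le _), (Finset.mem_filter.mp hi).2⟩)]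
  refine Finset.sum_congr rfl fun t ht => ?_
  congr 1
  rw [Finset.mem_Icc] at ht
  ext i
  simp only [Finset.mem_filter, Finset.mem_univ, true_and]
  omega

lemma nested {L N : ℕ} {X Y : Fin N → Fin L} (hX : Monotone X) (hY : Monotone Y) (s : ℕ) :
    (Finset.univ.filter (fun i => (X i : ℕ) + 1 ≤ s)) ⊆
      (Finset.univ.filter (fun i => (Y i : ℕ) + 1 ≤ s)) ∨
    (Finset.univ.filter (fun i => (Y i : ℕ) + 1 ≤ s)) ⊆
      (Finset.univ.filter (fun i => (X i : ℕ) + 1 ≤ s)) := by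
  by_contra h
  push_neg at h
  obtain ⟨h1, h2⟩ := h
  obtain ⟨a, ha, ha'⟩ := Finset.not_subset.mp h1
  obtain ⟨b, hb, hb'⟩ := Finset.not_subset.mp h2
  simp only [Finset.mem_filter, Finset.mem_univ, true_and] at ha ha' hb hb'
  rcases le_total a b with hab | hab
  · have h3 := hX hab
    have h4 := hY hab
    rw [Fin.le_def] at h3 h4
    omega
  · have h3 := hX hab
    have h4 := hY hab
    rw [Fin.le_def] at h3 h4
    omega

lemma card_fiber {L N : ℕ} {X Y : Fin N → Fin L} (hX : Monotone X) (hY : Monotone Y) (s : ℕ) :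
    (Finset.univ.filter
      (fun i => ¬(((X i : ℕ) + 1 ≤ s) ↔ ((Y i : ℕ) + 1 ≤ s)))).card =
    (((cum X s : ℤ)) - (cum Y s : ℤ)).natAbs := by
  rcases nested hX hY s with hsub | hsub
  · have hc : cum X s ≤ cum Y s := Finset.card_le_card hsub
    have hd : (Finset.univ.filter
        (fun i => ¬(((X i : ℕ) + 1 ≤ s) ↔ ((Y i : ℕ) + 1 ≤ s)))) =
        (Finset.univ.filter (fun i => (Y i : ℕ) + 1 ≤ s)) \
        (Finset.univ.filter (fun i => (X i : ℕ) + 1 ≤ s)) := by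
      ext i
      have : (X i : ℕ) + 1 ≤ s → (Y i : ℕ) + 1 ≤ s := fun h => by
        have := hsub (Finset.mem_filter.mpr ⟨Finset.mem_univ _, h⟩)
        exact (Finset.mem_filter.mp this).2
      simp only [Finset.mem_filter, Finset.mem_univ, true_and, Finset.mem_sdiff]
      tauto
    rw [hd, Finset.card_sdiff_of_subset hsub]
    unfold cum at hc ⊢
    omega
  · have hc : cum Y s ≤ cum X s := Finset.card_le_card hsub
    have hd : (Finset.univ.filter
        (fun i => ¬(((X i : ℕ) + 1 ≤ s) ↔ ((Y i : ℕ) + 1 ≤ s)))) =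
        (Finset.univ.filter (fun i => (X i : ℕ) + 1 ≤ s)) \
        (Finset.univ.filter (fun i => (Y i : ℕ) + 1 ≤ s)) := by
      ext i
      have : (Y i : ℕ) + 1 ≤ s → (X i : ℕ) + 1 ≤ s := fun h => by
        have := hsub (Finset.mem_filter.mpr ⟨Finset.mem_univ _, h⟩)
        exact (Finset.mem_filter.mp this).2
      simp only [Finset.mem_filter, Finset.mem_univ, true_and, Finset.mem_sdiff]
      tauto
    rw [hd, Finset.card_sdiff_of_subset hsub]
    unfold cum at hc ⊢
    omega

lemma pair_abs {L : ℕ} (a b : Fin L) :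
    (((a : ℕ) : ℤ) - ((b : ℕ) : ℤ)).natAbs =
    ((Finset.Icc 1 (L - 1)).filter
      (fun s => ¬(((a : ℕ) + 1 ≤ s) ↔ ((b : ℕ) + 1 ≤ s)))).card := by
  have ha := a.isLt
  have hb := b.isLt
  have : ((Finset.Icc 1 (L - 1)).filter
      (fun s => ¬(((a : ℕ) + 1 ≤ s) ↔ ((b : ℕ) + 1 ≤ s)))) =
      Finset.Icc (min (a : ℕ) (b : ℕ) + 1) (max (a : ℕ) (b : ℕ)) := by
    ext s
    simp only [Finset.mem_filter, Finset.mem_Icc]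
    omega
  rw [this, Nat.card_Icc]
  omega

lemma tdist_eq_sum_cum {L N : ℕ} {X Y : Fin N → Fin L} (hX : Monotone X) (hY : Monotone Y) :
    tdist X Y = ∑ s ∈ Finset.Icc 1 (L - 1), (((cum X s : ℤ)) - (cum Y s : ℤ)).natAbs := by
  unfold tdist
  have h1 : ∀ i : Fin N, (((X i : ℕ) : ℤ) - ((Y i : ℕ) : ℤ)).natAbs =
      ∑ s ∈ Finset.Icc 1 (L - 1),
        (if ¬(((X i : ℕ) + 1 ≤ s) ↔ ((Y i : ℕ) + 1 ≤ s)) then 1 else 0) := by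
    intro i
    rw [pair_abs (X i) (Y i), Finset.card_filter]
  rw [Finset.sum_congr rfl (fun i _ => h1 i), Finset.sum_comm]
  refine Finset.sum_congr rfl fun s _ => ?_
  rw [← card_fiber hX hY s, Finset.card_filter]

lemma cum_diff_of_adj {L N : ℕ} {X Y : Fin N → Fin L} (h : adjC L (occt X) (occt Y)) :
    ∃ j₀ ∈ Finset.Icc 1 (L - 1), ∀ s ∈ Finset.Icc 1 (L - 1),
      (((cum X s : ℤ)) - (cum Y s : ℤ)).natAbs = if s = j₀ then 1 else 0 := by
  obtain ⟨j₀, hj, hc, hr⟩ := h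
  refine ⟨j₀, hj, fun s hs => ?_⟩
  rw [Finset.mem_Icc] at hj hs
  set d : ℕ → ℤ := fun t => (occt X t : ℤ) - (occt Y t : ℤ) with hd
  have hz : ∀ t, t ≠ j₀ → t ≠ j₀ + 1 → d t = 0 := fun t h1 h2 => by
    simp [hd, hr t h1 h2]
  have hsum : (cum X s : ℤ) - (cum Y s : ℤ) = ∑ t ∈ Finset.Icc 1 s, d t := by
    rw [cum_eq_sum_occt, cum_eq_sum_occt]
    push_cast
    rw [Finset.sum_sub_distrib]
  rcases lt_trichotomy s j₀ with hlt | heq | hgt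
  · rw [if_neg (by omega), hsum]
    rw [Finset.sum_eq_zero fun t ht => hz t
      (by rw [Finset.mem_Icc] at ht; omega) (by rw [Finset.mem_Icc] at ht; omega)]
    rfl
  · subst heq
    rw [if_pos rfl, hsum]
    obtain ⟨j, rfl⟩ : ∃ j, s = j + 1 := ⟨s - 1, by omega⟩
    rw [Finset.sum_Icc_succ_top (by omega)]
    rw [Finset.sum_eq_zero fun t ht => hz t
      (by rw [Finset.mem_Icc] at ht; omega) (by rw [Finset.mem_Icc] at ht; omega)]
    rw [zero_add]
    rcases hc with ⟨h1, _⟩ | ⟨h1, _⟩ <;> simp [hd, h1]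
  · rw [if_neg (by omega), hsum]
    have hsub : ({j₀, j₀ + 1} : Finset ℕ) ⊆ Finset.Icc 1 s := by
      intro t ht
      simp only [Finset.mem_insert, Finset.mem_singleton] at ht
      rw [Finset.mem_Icc]
      omega
    rw [← Finset.sum_subset hsub (fun t ht ht' => hz t
      (by simp only [Finset.mem_insert, Finset.mem_singleton] at ht'; tauto)
      (by simp only [Finset.mem_insert, Finset.mem_singleton] at ht'; tauto))]
    rw [Finset.sum_pair (by omega)]
    have : d j₀ + d (j₀ + 1) = 0 := by
      rcases hc with ⟨h1, h2⟩ | ⟨h1, h2⟩ <;> simp [hd] <;> omega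
    rw [this]
    rfl

lemma tdist_eq_one_of_adj {L N : ℕ} {X Y : Fin N → Fin L} (hX : Monotone X) (hY : Monotone Y)
    (h : adjC L (occt X) (occt Y)) : tdist X Y = 1 := by
  obtain ⟨j₀, hj, hval⟩ := cum_diff_of_adj h
  rw [tdist_eq_sum_cum hX hY, Finset.sum_congr rfl hval, Finset.sum_ite_eq' _ j₀ (fun _ => 1),
    if_pos hj]

lemma tdist_triangle {L N : ℕ} (X Y Z : Fin N → Fin L) :
    tdist X Z ≤ tdist X Y + tdist Y Z := by
  unfold tdist
  rw [← Finset.sum_add_distrib]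
  refine Finset.sum_le_sum fun i _ => ?_
  have h : ((X i : ℕ) : ℤ) - ((Z i : ℕ) : ℤ) =
      (((X i : ℕ) : ℤ) - ((Y i : ℕ) : ℤ)) + (((Y i : ℕ) : ℤ) - ((Z i : ℕ) : ℤ)) := by ring
  rw [h]
  exact Int.natAbs_add_le _ _

lemma tdist_self {L N : ℕ} (X : Fin N → Fin L) : tdist X X = 0 := by
  unfold tdist; simp

lemma eq_of_tdist_eq_zero {L N : ℕ} {X Y : Fin N → Fin L} (h : tdist X Y = 0) : X = Y := by
  funext i
  unfold tdist at h
  rw [Finset.sum_eq_zero_iff] at h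
  have := h i (Finset.mem_univ i)
  exact Fin.ext (by omega)

lemma filter_univ_split {N : ℕ} (i : Fin N) (p : Fin N → Prop) :
    (Finset.univ.filter p : Finset (Fin N)) =
    if p i then insert i ((Finset.univ.erase i).filter p)
    else (Finset.univ.erase i).filter p := by
  conv_lhs => rw [show (Finset.univ : Finset (Fin N)) = insert i (Finset.univ.erase i) from
    (Finset.insert_erase (Finset.mem_univ i)).symm]
  rw [Finset.filter_insert]

lemma card_filter_comp_update {L N : ℕ} (X : Fin N → Fin L) (i : Fin N) (z : Fin L)
    (p : Fin L → Prop) :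
    ((Finset.univ.filter (fun j => p (Function.update X i z j))).card : ℤ) =
    ((Finset.univ.filter (fun j => p (X j))).card : ℤ)
      - (if p (X i) then 1 else 0) + (if p z then 1 else 0) := by
  have key : ∀ f : Fin N → Fin L, (∀ j : Fin N, j ≠ i → f j = X j) →
      ((Finset.univ.filter (fun j => p (f j))).card : ℤ) =
      (((Finset.univ.erase i).filter (fun j => p (X j))).card : ℤ)
        + (if p (f i) then 1 else 0) := by
    intro f hf
    have hfilter : (Finset.univ.erase i).filter (fun j => p (f j)) =
        (Finset.univ.erase i).filter (fun j => p (X j)) := by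
      refine Finset.filter_congr fun j hj => ?_
      rw [hf j (Finset.mem_erase.mp hj).1]
    rw [filter_univ_split i (fun j => p (f j))]
    split
    · rw [hfilter, Finset.card_insert_of_notMem
        (fun hmem => (Finset.mem_erase.mp (Finset.mem_of_mem_filter _ hmem)).1 rfl)]
      push_cast
      ring_nf
    · rw [hfilter]
      ring
  rw [key (Function.update X i z) (fun j hj => Function.update_of_ne hj _ _),
    key X (fun _ _ => rfl), Function.update_self]
  ring

lemma occt_update {L N : ℕ} (X : Fin N → Fin L) (i : Fin N) (z : Fin L) (s : ℕ) :
    (occt (Function.update X i z) s : ℤ) = (occt X s : ℤ)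
      - (if (X i : ℕ) + 1 = s then 1 else 0) + (if (z : ℕ) + 1 = s then 1 else 0) := by
  have h := card_filter_comp_update X i z (fun a => (a : ℕ) + 1 = s)
  unfold occt
  convert h using 4 <;> congr!

lemma occ_update {L N : ℕ} (X : Fin N → Fin L) (i : Fin N) (z : Fin L) (w : Fin L) :
    (occ (Function.update X i z) w : ℤ) = (occ X w : ℤ)
      - (if X i = w then 1 else 0) + (if z = w then 1 else 0) := by
  have h := card_filter_comp_update X i z (fun a => a = w)
  unfold occ
  convert h using 4 <;> congr!

lemma tdist_update {L N : ℕ} (X Y : Fin N → Fin L) (i : Fin N) (z : Fin L) :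
    (tdist (Function.update X i z) Y : ℤ) = (tdist X Y : ℤ)
      - ((((X i : ℕ) : ℤ) - ((Y i : ℕ) : ℤ)).natAbs : ℤ)
      + ((((z : ℕ) : ℤ) - ((Y i : ℕ) : ℤ)).natAbs : ℤ) := by
  unfold tdist
  rw [← Finset.sum_erase_add _ _ (Finset.mem_univ i),
    ← Finset.sum_erase_add _ (fun j => (((X j : ℕ) : ℤ) - ((Y j : ℕ) : ℤ)).natAbs)
      (Finset.mem_univ i)]
  have hsame : ∑ j ∈ Finset.univ.erase i,
      (((Function.update X i z j : ℕ) : ℤ) - ((Y j : ℕ) : ℤ)).natAbs =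
      ∑ j ∈ Finset.univ.erase i, (((X j : ℕ) : ℤ) - ((Y j : ℕ) : ℤ)).natAbs :=
    Finset.sum_congr rfl fun j hj => by rw [Function.update_of_ne (Finset.mem_erase.mp hj).1]
  rw [hsame, Function.update_self]
  push_cast
  ring

lemma exists_step {twoJ L N : ℕ} (h2J : 0 < twoJ) {X Y : Fin N → Fin L}
    (hX : isConf twoJ X) (hY : isConf twoJ Y) (hne : X ≠ Y) :
    ∃ Z : Fin N → Fin L, isConf twoJ Z ∧ adjC L (occt X) (occt Z) ∧
      tdist Z Y + 1 = tdist X Y := by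
  by_cases hS : (Finset.univ.filter (fun j => (Y j : ℕ) < (X j : ℕ))).Nonempty
  · -- Case A: some X-coordinate exceeds the Y-coordinate; move the least such down
    obtain ⟨i, hiS, hmin⟩ := Finset.exists_min_image _ id hS
    simp only [Finset.mem_filter, Finset.mem_univ, true_and] at hiS
    have hminle : ∀ j : Fin N, (Y j : ℕ) < (X j : ℕ) → i ≤ j := fun j hj =>
      hmin j (Finset.mem_filter.mpr ⟨Finset.mem_univ _, hj⟩)
    have hXle : ∀ j : Fin N, j < i → (X j : ℕ) ≤ (Y j : ℕ) := by
      intro j hj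
      by_contra hc
      exact absurd (hminle j (by omega)) (not_le.mpr hj)
    have hv1 : 1 ≤ (X i : ℕ) := by omega
    have hvL : (X i : ℕ) < L := (X i).isLt
    set v := (X i : ℕ) with hv
    set z : Fin L := ⟨v - 1, by omega⟩ with hzdef
    have hzval : (z : ℕ) = v - 1 := rfl
    set Z := Function.update X i z with hZ
    have hZi : Z i = z := Function.update_self i z X
    have hZne : ∀ j : Fin N, j ≠ i → Z j = X j := fun j hj => Function.update_of_ne hj z X
    have hYi : (Y i : ℕ) ≤ v - 1 := by omega
    have hmono : Monotone Z := by
      intro a b hab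
      by_cases hai : a = i
      · by_cases hbi : b = i
        · rw [hai, hbi]
        · have hib : i ≤ b := hai ▸ hab
          have h1 : X i ≤ X b := hX.1 hib
          rw [Fin.le_def] at h1
          rw [hai, hZi, hZne b hbi, Fin.le_def]
          omega
      · by_cases hbi : b = i
        · have hab' : a ≤ i := hbi ▸ hab
          have hlt : a < i := lt_of_le_of_ne hab' hai
          have h1 : (X a : ℕ) ≤ Y a := hXle a hlt
          have h2 : Y a ≤ Y i := hY.1 (le_of_lt hlt)
          rw [Fin.le_def] at h2
          rw [hbi, hZi, hZne a hai, Fin.le_def]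
          omega
        · rw [hZne a hai, hZne b hbi]
          exact hX.1 hab
    have hocc : ∀ w, occ Z w ≤ twoJ := by
      intro w
      have hupd := occ_update X i z w
      rw [← hZ] at hupd
      by_cases hwz : z = w
      · have hXiw : X i ≠ w := by
          rw [← hwz]
          intro hc
          have hc2 : (X i : ℕ) = (z : ℕ) := congrArg _ hc
          omega
        rw [if_neg hXiw, if_pos hwz] at hupd
        by_cases hem : occ X w = 0
        · omega
        · have hnon : (Finset.univ.filter (fun j => X j = w)).Nonempty := by
            rw [← Finset.card_pos]
            have : occ X w = (Finset.univ.filter (fun j => X j = w)).card := rfl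
            omega
          obtain ⟨j₁, hj₁⟩ := hnon
          have hXj₁ : X j₁ = w := (Finset.mem_filter.mp hj₁).2
          have hwv : (w : ℕ) = v - 1 := by rw [← hwz]
          have hkey : ∀ j : Fin N, X j = w → Y j = w ∧ Y i = w := by
            intro j hj
            have hjv : (X j : ℕ) = v - 1 := by rw [hj, hwv]
            have hji : j < i := by
              by_contra hc
              push_neg at hc
              have h1 := hX.1 hc
              rw [Fin.le_def] at h1
              omega
            have h1 : (X j : ℕ) ≤ Y j := hXle j hji
            have h2 : Y j ≤ Y i := hY.1 (le_of_lt hji)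
            rw [Fin.le_def] at h2
            exact ⟨Fin.ext (by omega), Fin.ext (by omega)⟩
          have hsub : insert i (Finset.univ.filter (fun j => X j = w)) ⊆
              Finset.univ.filter (fun j => Y j = w) := by
            intro x hx
            rcases Finset.mem_insert.mp hx with rfl | hx'
            · exact Finset.mem_filter.mpr ⟨Finset.mem_univ _, (hkey j₁ hXj₁).2⟩
            · exact Finset.mem_filter.mpr ⟨Finset.mem_univ _,
                (hkey x (Finset.mem_filter.mp hx').2).1⟩
          have hiX : i ∉ Finset.univ.filter (fun j => X j = w) := by
            simp only [Finset.mem_filter, Finset.mem_univ, true_and]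
            exact hXiw
          have hcard := Finset.card_le_card hsub
          rw [Finset.card_insert_of_notMem hiX] at hcard
          have hYw := occ_le_of_conf hY w
          have he1 : occ X w = (Finset.univ.filter (fun j => X j = w)).card := rfl
          have he2 : occ Y w = (Finset.univ.filter (fun j => Y j = w)).card := rfl
          omega
      · by_cases hwx : X i = w
        · rw [if_pos hwx, if_neg hwz] at hupd
          have := occ_le_of_conf hX w
          omega
        · rw [if_neg hwx, if_neg hwz] at hupd
          have := occ_le_of_conf hX w
          omega
    have hZconf : isConf twoJ Z := conf_of_occ hmono hocc
    have hadj : adjC L (occt X) (occt Z) := by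
      refine ⟨v, Finset.mem_Icc.mpr ⟨hv1, by omega⟩, Or.inr ⟨?_, ?_⟩, ?_⟩
      · have h := occt_update X i z v
        rw [← hZ, if_neg (by omega), if_pos (by omega)] at h
        omega
      · have h := occt_update X i z (v + 1)
        rw [← hZ, if_pos (by omega), if_neg (by omega)] at h
        omega
      · intro j hj1 hj2
        have h := occt_update X i z j
        rw [← hZ, if_neg (by omega), if_neg (by omega)] at h
        omega
    refine ⟨Z, hZconf, hadj, ?_⟩
    have h := tdist_update X Y i z
    rw [← hZ] at h
    omega
  · -- Case B: every X-coordinate is at most the Y-coordinate; move the largest strict one up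
    have hall : ∀ j : Fin N, (X j : ℕ) ≤ (Y j : ℕ) := by
      intro j
      by_contra hc
      exact hS ⟨j, Finset.mem_filter.mpr ⟨Finset.mem_univ _, by omega⟩⟩
    have hT : (Finset.univ.filter (fun j => (X j : ℕ) < (Y j : ℕ))).Nonempty := by
      obtain ⟨j, hj⟩ := Function.ne_iff.mp hne
      refine ⟨j, Finset.mem_filter.mpr ⟨Finset.mem_univ _, ?_⟩⟩
      have := hall j
      have : (X j : ℕ) ≠ (Y j : ℕ) := fun hc => hj (Fin.ext hc)
      omega
    obtain ⟨i, hiT, hmax⟩ := Finset.exists_max_image _ id hT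
    simp only [Finset.mem_filter, Finset.mem_univ, true_and] at hiT
    have hmaxle : ∀ j : Fin N, (X j : ℕ) < (Y j : ℕ) → j ≤ i := fun j hj =>
      hmax j (Finset.mem_filter.mpr ⟨Finset.mem_univ _, hj⟩)
    have hXeq : ∀ j : Fin N, i < j → (X j : ℕ) = (Y j : ℕ) := by
      intro j hj
      have h1 := hall j
      by_contra hc
      exact absurd (hmaxle j (by omega)) (not_le.mpr hj)
    have hYiL : (Y i : ℕ) < L := (Y i).isLt
    set v := (X i : ℕ) with hv
    have hvY : v + 1 ≤ (Y i : ℕ) := hiT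
    set z : Fin L := ⟨v + 1, by omega⟩ with hzdef
    have hzval : (z : ℕ) = v + 1 := rfl
    set Z := Function.update X i z with hZ
    have hZi : Z i = z := Function.update_self i z X
    have hZne : ∀ j : Fin N, j ≠ i → Z j = X j := fun j hj => Function.update_of_ne hj z X
    have hmono : Monotone Z := by
      intro a b hab
      by_cases hai : a = i
      · by_cases hbi : b = i
        · rw [hai, hbi]
        · have hib : i ≤ b := hai ▸ hab
          have hlt : i < b := lt_of_le_of_ne hib (fun hc => hbi hc.symm)
          have h1 : Y i ≤ Y b := hY.1 hib
          rw [Fin.le_def] at h1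
          have h2 := hXeq b hlt
          rw [hai, hZi, hZne b hbi, Fin.le_def]
          omega
      · by_cases hbi : b = i
        · have hab' : a ≤ i := hbi ▸ hab
          have h1 : X a ≤ X i := hX.1 hab'
          rw [Fin.le_def] at h1
          rw [hbi, hZi, hZne a hai, Fin.le_def]
          omega
        · rw [hZne a hai, hZne b hbi]
          exact hX.1 hab
    have hocc : ∀ w, occ Z w ≤ twoJ := by
      intro w
      have hupd := occ_update X i z w
      rw [← hZ] at hupd
      by_cases hwz : z = w
      · have hXiw : X i ≠ w := by
          rw [← hwz]
          intro hc
          have hc2 : (X i : ℕ) = (z : ℕ) := congrArg _ hc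
          omega
        rw [if_neg hXiw, if_pos hwz] at hupd
        by_cases hem : occ X w = 0
        · omega
        · have hnon : (Finset.univ.filter (fun j => X j = w)).Nonempty := by
            rw [← Finset.card_pos]
            have : occ X w = (Finset.univ.filter (fun j => X j = w)).card := rfl
            omega
          obtain ⟨j₁, hj₁⟩ := hnon
          have hXj₁ : X j₁ = w := (Finset.mem_filter.mp hj₁).2
          have hwv : (w : ℕ) = v + 1 := by rw [← hwz]
          have hkey : ∀ j : Fin N, X j = w → Y j = w ∧ Y i = w := by
            intro j hj
            have hjv : (X j : ℕ) = v + 1 := by rw [hj, hwv]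
            have hji : i < j := by
              by_contra hc
              push_neg at hc
              have h1 := hX.1 hc
              rw [Fin.le_def] at h1
              omega
            have h1 : (X j : ℕ) = Y j := hXeq j hji
            have h2 : Y i ≤ Y j := hY.1 (le_of_lt hji)
            rw [Fin.le_def] at h2
            exact ⟨Fin.ext (by omega), Fin.ext (by omega)⟩
          have hsub : insert i (Finset.univ.filter (fun j => X j = w)) ⊆
              Finset.univ.filter (fun j => Y j = w) := by
            intro x hx
            rcases Finset.mem_insert.mp hx with rfl | hx'
            · exact Finset.mem_filter.mpr ⟨Finset.mem_univ _, (hkey j₁ hXj₁).2⟩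
            · exact Finset.mem_filter.mpr ⟨Finset.mem_univ _,
                (hkey x (Finset.mem_filter.mp hx').2).1⟩
          have hiX : i ∉ Finset.univ.filter (fun j => X j = w) := by
            simp only [Finset.mem_filter, Finset.mem_univ, true_and]
            exact hXiw
          have hcard := Finset.card_le_card hsub
          rw [Finset.card_insert_of_notMem hiX] at hcard
          have hYw := occ_le_of_conf hY w
          have he1 : occ X w = (Finset.univ.filter (fun j => X j = w)).card := rfl
          have he2 : occ Y w = (Finset.univ.filter (fun j => Y j = w)).card := rfl
          omega
      · by_cases hwx : X i = w
        · rw [if_pos hwx, if_neg hwz] at hupd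
          have := occ_le_of_conf hX w
          omega
        · rw [if_neg hwx, if_neg hwz] at hupd
          have := occ_le_of_conf hX w
          omega
    have hZconf : isConf twoJ Z := conf_of_occ hmono hocc
    have hadj : adjC L (occt X) (occt Z) := by
      refine ⟨v + 1, Finset.mem_Icc.mpr ⟨by omega, by omega⟩, Or.inl ⟨?_, ?_⟩, ?_⟩
      · have h := occt_update X i z (v + 1)
        rw [← hZ, if_pos (by omega), if_neg (by omega)] at h
        omega
      · have h := occt_update X i z (v + 1 + 1)
        rw [← hZ, if_neg (by omega), if_pos (by omega)] at h
        omega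
      · intro j hj1 hj2
        have h := occt_update X i z j
        rw [← hZ, if_neg (by omega), if_neg (by omega)] at h
        omega
    refine ⟨Z, hZconf, hadj, ?_⟩
    have h := tdist_update X Y i z
    rw [← hZ] at h
    omega


lemma tdist_le_length {twoJ L N : ℕ} {X Y : {X : Fin N → Fin L // X ∈ confs twoJ L N}}
    (p : (confGraph twoJ L N).Walk X Y) : tdist X.1 Y.1 ≤ p.length := by
  induction p with
  | nil => simp [tdist_self]
  | @cons u v w h p ih =>
    rw [SimpleGraph.Walk.length_cons]
    have h1 : tdist u.1 v.1 = 1 := tdist_eq_one_of_adj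
      ((Finset.mem_filter.mp u.2).2.1) ((Finset.mem_filter.mp v.2).2.1) h
    have h2 := tdist_triangle u.1 v.1 w.1
    omega

lemma reach_and_le {twoJ L N : ℕ} (h2J : 0 < twoJ) :
    ∀ (n : ℕ) (X Y : {X : Fin N → Fin L // X ∈ confs twoJ L N}), tdist X.1 Y.1 = n →
      ∃ p : (confGraph twoJ L N).Walk X Y, p.length ≤ n := by
  intro n
  induction n with
  | zero =>
    intro X Y h
    obtain rfl : X = Y := Subtype.ext (eq_of_tdist_eq_zero h)
    exact ⟨SimpleGraph.Walk.nil, by simp⟩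
  | succ n ih =>
    intro X Y h
    have hX := (Finset.mem_filter.mp X.2).2
    have hY := (Finset.mem_filter.mp Y.2).2
    have hne : X.1 ≠ Y.1 := fun hc => by rw [hc, tdist_self] at h; omega
    obtain ⟨Z, hZconf, hadj, htd⟩ := exists_step h2J hX hY hne
    have hZmem : Z ∈ confs twoJ L N := Finset.mem_filter.mpr ⟨Finset.mem_univ _, hZconf⟩
    obtain ⟨q, hq⟩ := ih ⟨Z, hZmem⟩ Y (by show tdist Z Y.1 = n; omega)
    exact ⟨SimpleGraph.Walk.cons (show (confGraph twoJ L N).Adj X ⟨Z, hZmem⟩ from hadj) q,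
      by rw [SimpleGraph.Walk.length_cons]; omega⟩


/-- any two configurations in `S_L^N` are connected in the configuration graph,
and the graph distance equals `∑ᵢ |xᵢ − yᵢ|`. -/
theorem graph_dist_eq_sum_abs (twoJ L N : ℕ) (h2J : 0 < twoJ) (hL : 2 ≤ L)
    (X Y : {X : Fin N → Fin L // X ∈ confs twoJ L N}) :
    (confGraph twoJ L N).Reachable X Y ∧
      (confGraph twoJ L N).dist X Y = tdist X.1 Y.1 := by
  obtain ⟨p, hp⟩ := reach_and_le h2J (tdist X.1 Y.1) X Y rfl
  have hreach : (confGraph twoJ L N).Reachable X Y := ⟨p⟩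
  refine ⟨hreach, le_antisymm (le_trans (SimpleGraph.dist_le p) hp) ?_⟩
  obtain ⟨q, hq⟩ := hreach.exists_walk_length_eq_dist
  rw [← hq]
  exact tdist_le_length q
end

section
/- Let N ∈ ℕ, c ∈ ℤ, γ > 0, and let C = (c, c+1, …, c+N−1). Then the sum over all strictly increasing N-tuples X = (x_1,…,x_N) ∈ ℤ^N of exp(−γ ∑_{i=1}^{N} |x_i − (c+i−1)|) is at most L_γ := (1 − e^{−γ})^{−1} (∏_{k=1}^{∞} (1 − e^{−kγ})^{−1})², and L_γ is finite. -/
open Finset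
open scoped ENNReal NNReal

namespace SEDAux

/-! ### generic helper lemmas -/

/-- weighted telescoping -/
lemma sumA (Z : ℕ → ℤ) (n : ℕ) :
    ∑ i ∈ range n, Z i
      = (n : ℤ) * Z 0 + ∑ k ∈ range n, ((n - 1 - k : ℕ) : ℤ) * (Z (k+1) - Z k) := by
  induction n with
  | zero => simp
  | succ n ih =>
    have htel : ∑ k ∈ range n, (Z (k+1) - Z k) = Z n - Z 0 := Finset.sum_range_sub Z n
    have hsplit : ∑ k ∈ range (n+1), ((n + 1 - 1 - k : ℕ) : ℤ) * (Z (k+1) - Z k)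
        = ∑ k ∈ range n, (((n - 1 - k : ℕ) : ℤ) * (Z (k+1) - Z k) + (Z (k+1) - Z k)) := by
      rw [Finset.sum_range_succ]
      have h0 : ((n + 1 - 1 - n : ℕ) : ℤ) = 0 := by norm_num
      rw [h0, zero_mul, add_zero]
      refine Finset.sum_congr rfl (fun k hk => ?_)
      have hk' : k < n := Finset.mem_range.mp hk
      have h1 : (n + 1 - 1 - k : ℕ) = (n - 1 - k) + 1 := by omega
      rw [h1]
      push_cast
      ring
    rw [Finset.sum_range_succ, ih, hsplit, Finset.sum_add_distrib, htel]
    push_cast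
    ring

/-- tsum over a finite pi type of a product of independent factors -/
lemma tsum_pi_fin : ∀ (M : ℕ) (h : Fin M → ℕ → ℝ≥0∞),
    ∑' e : Fin M → ℕ, ∏ k, h k (e k) = ∏ k, ∑' n, h k n := by
  intro M
  induction M with
  | zero =>
    intro h
    have : ∀ e : Fin 0 → ℕ, ∏ k, h k (e k) = 1 := fun e => by simp
    simp only [this]
    haveI : Unique (Fin 0 → ℕ) := ⟨⟨fun k => 0⟩, fun f => funext fun k => k.elim0⟩
    rw [tsum_eq_single (default : Fin 0 → ℕ) (fun b hb => absurd (Subsingleton.elim b default) hb)]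
    simp
  | succ M ih =>
    intro h
    rw [← Equiv.tsum_eq (Fin.consEquiv (fun _ : Fin (M+1) => ℕ))]
    have hval : ∀ p : ℕ × (Fin M → ℕ), ∏ k, h k ((Fin.consEquiv (fun _ : Fin (M+1) => ℕ)) p k)
        = h 0 p.1 * ∏ k : Fin M, h k.succ (p.2 k) := by
      intro p
      rw [Fin.prod_univ_succ]
      simp [Fin.consEquiv]
    simp only [hval]
    rw [ENNReal.tsum_prod']
    simp only [ENNReal.tsum_mul_left]
    rw [ENNReal.tsum_mul_right, Fin.prod_univ_succ, ih (fun k => h k.succ)]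

/-- convergence of the infinite product -/
lemma mult_aux {γ : ℝ} (hγ : 0 < γ) :
    Multipliable (fun k : ℕ => (1 - Real.exp (-(((k : ℝ) + 1) * γ)))⁻¹) := by
  have hq0 : 0 < Real.exp (-γ) := Real.exp_pos _
  have hq1 : Real.exp (-γ) < 1 := Real.exp_lt_one_iff.mpr (by linarith)
  have hfac : ∀ k : ℕ, Real.exp (-(((k : ℝ) + 1) * γ)) = Real.exp (-γ) ^ (k+1) := by
    intro k
    rw [← Real.exp_nat_mul]
    congr 1
    push_cast
    ring
  have hlt : ∀ k : ℕ, Real.exp (-(((k : ℝ) + 1) * γ)) < 1 := fun k => by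
    rw [hfac]; exact pow_lt_one₀ hq0.le hq1 (Nat.succ_ne_zero k)
  have hpos : ∀ k : ℕ, 0 < 1 - Real.exp (-(((k : ℝ) + 1) * γ)) := fun k => by
    have := hlt k; linarith
  have key : ∀ k : ℕ, Real.log ((1 - Real.exp (-(((k : ℝ) + 1) * γ)))⁻¹)
      ≤ Real.exp (-γ) ^ k * (Real.exp (-γ) * (1 - Real.exp (-γ))⁻¹) := by
    intro k
    have hr0 : 0 < Real.exp (-(((k : ℝ) + 1) * γ)) := Real.exp_pos _
    have h1 : Real.log ((1 - Real.exp (-(((k : ℝ) + 1) * γ)))⁻¹)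
        ≤ (1 - Real.exp (-(((k : ℝ) + 1) * γ)))⁻¹ - 1 :=
      Real.log_le_sub_one_of_pos (inv_pos.mpr (hpos k))
    have h2 : (1 - Real.exp (-(((k : ℝ) + 1) * γ)))⁻¹ - 1
        = Real.exp (-(((k : ℝ) + 1) * γ)) * (1 - Real.exp (-(((k : ℝ) + 1) * γ)))⁻¹ := by
      have hne : (1 - Real.exp (-(((k : ℝ) + 1) * γ))) ≠ 0 := ne_of_gt (hpos k)
      linear_combination mul_inv_cancel₀ hne
    have hrq : Real.exp (-(((k : ℝ) + 1) * γ)) ≤ Real.exp (-γ) := by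
      rw [hfac]
      exact pow_le_of_le_one hq0.le hq1.le (Nat.succ_ne_zero k)
    have h3 : (1 - Real.exp (-(((k : ℝ) + 1) * γ)))⁻¹ ≤ (1 - Real.exp (-γ))⁻¹ := by
      apply inv_anti₀ (by linarith)
      linarith
    have h4 : Real.exp (-(((k : ℝ) + 1) * γ)) * (1 - Real.exp (-(((k : ℝ) + 1) * γ)))⁻¹
        ≤ Real.exp (-(((k : ℝ) + 1) * γ)) * (1 - Real.exp (-γ))⁻¹ :=
      mul_le_mul_of_nonneg_left h3 hr0.le
    have h5 : Real.exp (-(((k : ℝ) + 1) * γ)) * (1 - Real.exp (-γ))⁻¹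
        = Real.exp (-γ) ^ k * (Real.exp (-γ) * (1 - Real.exp (-γ))⁻¹) := by
      rw [hfac, pow_succ]
      ring
    linarith
  have hsummable : Summable (fun k : ℕ => Real.log ((1 - Real.exp (-(((k : ℝ) + 1) * γ)))⁻¹)) := by
    apply Summable.of_nonneg_of_le
      (fun k => Real.log_nonneg ((one_le_inv₀ (hpos k)).mpr
        (by linarith [Real.exp_pos (-(((k : ℝ) + 1) * γ))])))
      key
    exact (summable_geometric_of_lt_one hq0.le hq1).mul_right _
  exact Real.multipliable_of_summable_log (fun k => inv_pos.mpr (hpos k)) hsummable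

/-! ### the encoding -/

variable (N : ℕ) (c : ℤ)

def Yf (X : Fin N → ℤ) : ℕ → ℤ := fun n => if h : n < N then X ⟨n, h⟩ - c - n else 0
def mC (X : Fin N → ℤ) : ℕ := ((range N).filter (fun n => Yf N c X n < 0)).card
def Df (X : Fin N → ℤ) (k : ℕ) : ℕ := (Yf N c X (k+1) - Yf N c X k).toNat
def ef (X : Fin N → ℤ) (k : ℕ) : ℕ := if k + 1 = mC N c X then 0 else Df N c X k
def uf (X : Fin N → ℤ) : ℕ := (-(Yf N c X (mC N c X - 1)) - 1).toNat
def vf (X : Fin N → ℤ) : ℕ := (Yf N c X (mC N c X)).toNat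
def ccf (m k : ℕ) : ℕ := if k + 1 < m then k + 1 else N - 1 - k

variable {N c}
variable {X : Fin N → ℤ} (hX : StrictMono X)

omit hX in
lemma mC_le : mC N c X ≤ N := le_trans (card_filter_le _ _) (by simp)

omit hX in
lemma mC_def : mC N c X = ((range N).filter (fun n => Yf N c X n < 0)).card := rfl

section
include hX

lemma Yf_step : ∀ n, n + 1 < N → Yf N c X n ≤ Yf N c X (n+1) := by
  intro n h
  have hn : n < N := by omega
  rw [Yf, Yf, dif_pos h, dif_pos hn]
  have hlt : X ⟨n, hn⟩ < X ⟨n+1, h⟩ := hX (by simp [Fin.lt_def])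
  have := Int.add_one_le_iff.mpr hlt
  push_cast
  omega

lemma Yf_mono : ∀ a b, a ≤ b → b < N → Yf N c X a ≤ Yf N c X b := by
  intro a b hab hbN
  obtain ⟨d, rfl⟩ := Nat.exists_eq_add_of_le hab
  clear hab
  induction d with
  | zero => simp
  | succ d ihd =>
    have h1 : a + d + 1 < N := by omega
    calc Yf N c X a ≤ Yf N c X (a + d) := ihd (by omega)
      _ ≤ Yf N c X (a + d + 1) := Yf_step hX _ h1

lemma Yf_neg_iff : ∀ n, n < N → (Yf N c X n < 0 ↔ n < mC N c X) := by
  intro n hn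
  constructor
  · intro hneg
    have hsub : range (n+1) ⊆ (range N).filter (fun a => Yf N c X a < 0) := by
      intro a ha
      rw [mem_range] at ha
      rw [mem_filter, mem_range]
      exact ⟨by omega, lt_of_le_of_lt (Yf_mono hX a n (by omega) hn) hneg⟩
    have := card_le_card hsub
    rw [card_range] at this
    exact lt_of_lt_of_le (Nat.lt_succ_self n) this
  · intro hlt
    by_contra hge
    push_neg at hge
    have hsub : (range N).filter (fun a => Yf N c X a < 0) ⊆ range n := by
      intro a ha
      rw [mem_filter, mem_range] at ha
      rw [mem_range]
      by_contra hna
      push_neg at hna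
      exact absurd (lt_of_le_of_lt (le_trans hge (Yf_mono hX n a hna ha.1)) ha.2) (lt_irrefl 0)
    have := card_le_card hsub
    rw [card_range] at this
    rw [mC_def] at hlt
    omega

lemma Df_cast : ∀ k, k + 1 < N → ((Df N c X k : ℤ)) = Yf N c X (k+1) - Yf N c X k := by
  intro k h
  exact Int.toNat_of_nonneg (sub_nonneg.mpr (Yf_step hX k h))

lemma uf_cast (hm : 1 ≤ mC N c X) : ((uf N c X : ℤ)) = -(Yf N c X (mC N c X - 1)) - 1 := by
  have hmN : mC N c X ≤ N := mC_le
  have h1 : mC N c X - 1 < N := by omega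
  have hneg : Yf N c X (mC N c X - 1) < 0 := (Yf_neg_iff hX _ h1).mpr (by omega)
  exact Int.toNat_of_nonneg (by omega)

lemma vf_cast (hm : mC N c X < N) : ((vf N c X : ℤ)) = Yf N c X (mC N c X) := by
  have hnonneg : ¬ (Yf N c X (mC N c X) < 0) := fun h => by
    have := (Yf_neg_iff hX _ hm).mp h; omega
  exact Int.toNat_of_nonneg (by omega)

end

omit hX in
lemma Yf_tel : ∀ a b, a ≤ b →
    ∑ k ∈ Ico a b, (Yf N c X (k+1) - Yf N c X k) = Yf N c X b - Yf N c X a := by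
  intro a b hab
  rw [Finset.sum_Ico_eq_sum_range]
  have h := Finset.sum_range_sub (fun j => Yf N c X (a + j)) (b - a)
  rw [show a + (b - a) = b from by omega] at h
  rw [show a + 0 = a from rfl] at h
  exact h

section
include hX

lemma head_eq (hm : 1 ≤ mC N c X) :
    ∑ i ∈ range (mC N c X), (-(Yf N c X i))
      = (mC N c X : ℤ) * ((uf N c X : ℤ) + 1)
        + ∑ k ∈ range (mC N c X - 1), ((k : ℤ) + 1) * (ef N c X k : ℤ) := by
  have hmN : mC N c X ≤ N := mC_le
  have key := sumA (fun j => -(Yf N c X (mC N c X - 1 - j))) (mC N c X)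
  have hrefl : ∑ j ∈ range (mC N c X), -(Yf N c X (mC N c X - 1 - j))
      = ∑ i ∈ range (mC N c X), -(Yf N c X i) :=
    Finset.sum_range_reflect (fun i => -(Yf N c X i)) (mC N c X)
  have hterm : ∀ k, ((mC N c X - 1 - k : ℕ) : ℤ)
        * (-(Yf N c X (mC N c X - 1 - (k+1))) - -(Yf N c X (mC N c X - 1 - k)))
      = (fun i : ℕ => (i : ℤ) * (Yf N c X i - Yf N c X (i - 1))) (mC N c X - 1 - k) := by
    intro k
    simp only []
    rw [show mC N c X - 1 - (k+1) = mC N c X - 1 - k - 1 from by omega]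
    ring
  have hrefl2 : ∑ k ∈ range (mC N c X),
        (fun i : ℕ => (i : ℤ) * (Yf N c X i - Yf N c X (i - 1))) (mC N c X - 1 - k)
      = ∑ k ∈ range (mC N c X), (k : ℤ) * (Yf N c X k - Yf N c X (k - 1)) :=
    Finset.sum_range_reflect (fun i : ℕ => (i : ℤ) * (Yf N c X i - Yf N c X (i - 1))) (mC N c X)
  have hpeel : ∑ k ∈ range (mC N c X), (k : ℤ) * (Yf N c X k - Yf N c X (k - 1))
      = (∑ k ∈ range (mC N c X - 1),
          ((k+1 : ℕ) : ℤ) * (Yf N c X (k+1) - Yf N c X (k+1-1))) + 0 := by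
    rw [show mC N c X = (mC N c X - 1) + 1 from by omega]
    rw [Finset.sum_range_succ' (fun k => (k : ℤ) * (Yf N c X k - Yf N c X (k - 1))) (mC N c X - 1)]
    norm_num
  have hgk : ∀ k ∈ range (mC N c X - 1),
      ((k+1 : ℕ) : ℤ) * (Yf N c X (k+1) - Yf N c X (k+1-1))
        = ((k : ℤ) + 1) * (ef N c X k : ℤ) := by
    intro k hk
    rw [mem_range] at hk
    have h2 : k + 1 < N := by omega
    rw [show k + 1 - 1 = k from rfl, ef, if_neg (by omega), Df_cast hX k h2]
    push_cast
    ring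
  have huf : -(Yf N c X (mC N c X - 1)) = (uf N c X : ℤ) + 1 := by
    have := uf_cast hX hm; omega
  calc ∑ i ∈ range (mC N c X), -(Yf N c X i)
      = ∑ j ∈ range (mC N c X), -(Yf N c X (mC N c X - 1 - j)) := hrefl.symm
    _ = (mC N c X : ℤ) * -(Yf N c X (mC N c X - 1 - 0))
        + ∑ k ∈ range (mC N c X), ((mC N c X - 1 - k : ℕ) : ℤ)
            * (-(Yf N c X (mC N c X - 1 - (k+1))) - -(Yf N c X (mC N c X - 1 - k))) := key
    _ = (mC N c X : ℤ) * ((uf N c X : ℤ) + 1)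
        + ∑ k ∈ range (mC N c X),
            (fun i : ℕ => (i : ℤ) * (Yf N c X i - Yf N c X (i - 1))) (mC N c X - 1 - k) := by
        rw [Finset.sum_congr rfl (fun k _ => hterm k),
          show mC N c X - 1 - 0 = mC N c X - 1 from rfl, huf]
    _ = (mC N c X : ℤ) * ((uf N c X : ℤ) + 1)
        + ∑ k ∈ range (mC N c X - 1), ((k : ℤ) + 1) * (ef N c X k : ℤ) := by
        rw [hrefl2, hpeel, add_zero, Finset.sum_congr rfl hgk]

lemma tail_eq (hm : mC N c X < N) :
    ∑ i ∈ Ico (mC N c X) N, Yf N c X i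
      = ((N - mC N c X : ℕ) : ℤ) * (vf N c X : ℤ)
        + ∑ k ∈ Ico (mC N c X) (N - 1), ((N - 1 - k : ℕ) : ℤ) * (ef N c X k : ℤ) := by
  have key := sumA (fun j => Yf N c X (mC N c X + j)) (N - mC N c X)
  have hL : ∑ i ∈ Ico (mC N c X) N, Yf N c X i
      = ∑ j ∈ range (N - mC N c X), Yf N c X (mC N c X + j) :=
    Finset.sum_Ico_eq_sum_range _ _ _
  have hpeel : ∑ k ∈ range (N - mC N c X), ((N - mC N c X - 1 - k : ℕ) : ℤ)
        * (Yf N c X (mC N c X + (k+1)) - Yf N c X (mC N c X + k))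
      = ∑ k ∈ range (N - mC N c X - 1), ((N - mC N c X - 1 - k : ℕ) : ℤ)
        * (Yf N c X (mC N c X + (k+1)) - Yf N c X (mC N c X + k)) := by
    rw [show N - mC N c X = (N - mC N c X - 1) + 1 from by omega, Finset.sum_range_succ]
    norm_num
  have hmap : ∑ k ∈ Ico (mC N c X) (N - 1), ((N - 1 - k : ℕ) : ℤ) * (ef N c X k : ℤ)
      = ∑ k ∈ range (N - mC N c X - 1), ((N - mC N c X - 1 - k : ℕ) : ℤ)
        * (Yf N c X (mC N c X + (k+1)) - Yf N c X (mC N c X + k)) := by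
    rw [Finset.sum_Ico_eq_sum_range]
    rw [show N - 1 - mC N c X = N - mC N c X - 1 from by omega]
    refine Finset.sum_congr rfl (fun j hj => ?_)
    rw [mem_range] at hj
    have h1 : mC N c X + j + 1 < N := by omega
    rw [ef, if_neg (by omega), Df_cast hX _ h1]
    rw [show N - 1 - (mC N c X + j) = N - mC N c X - 1 - j from by omega]
    rw [show mC N c X + (j+1) = mC N c X + j + 1 from rfl]
  have hvf : Yf N c X (mC N c X + 0) = (vf N c X : ℤ) := by
    rw [show mC N c X + 0 = mC N c X from rfl, vf_cast hX hm]
  rw [hL, key, hvf, hmap, hpeel]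

end

omit hX in
lemma cc_sum_split (hmN : mC N c X ≤ N) :
    ∑ k ∈ range (N - 1), ((ccf N (mC N c X) k : ℕ) : ℤ) * (ef N c X k : ℤ)
      = (∑ k ∈ range (mC N c X - 1), ((k : ℤ) + 1) * (ef N c X k : ℤ))
        + ∑ k ∈ Ico (mC N c X) (N - 1), ((N - 1 - k : ℕ) : ℤ) * (ef N c X k : ℤ) := by
  by_cases hm : mC N c X = 0
  · rw [hm]
    simp only [Nat.zero_sub, range_zero, sum_empty, zero_add]
    rw [range_eq_Ico]
    refine Finset.sum_congr rfl (fun k hk => ?_)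
    rw [ccf, if_neg (by omega)]
  · have hm1 : 1 ≤ mC N c X := by omega
    rw [← Finset.sum_range_add_sum_Ico
        (fun k => ((ccf N (mC N c X) k : ℕ) : ℤ) * (ef N c X k : ℤ))
        (show mC N c X - 1 ≤ N - 1 by omega)]
    congr 1
    · refine Finset.sum_congr rfl (fun k hk => ?_)
      rw [mem_range] at hk
      rw [ccf, if_pos (by omega)]
      push_cast
      ring
    · by_cases hlt : mC N c X - 1 < N - 1
      · rw [Finset.sum_eq_sum_Ico_succ_bot hlt]
        rw [ef, if_pos (by omega), Nat.cast_zero, mul_zero, zero_add]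
        rw [show mC N c X - 1 + 1 = mC N c X from by omega]
        refine Finset.sum_congr rfl (fun k hk => ?_)
        rw [mem_Ico] at hk
        rw [ccf, if_neg (by omega)]
      · rw [Finset.Ico_eq_empty (by omega), Finset.Ico_eq_empty (by omega)]
        simp

section
include hX

lemma exponent_eq :
    ∑ i ∈ range N, (Yf N c X i).natAbs
      = mC N c X * (uf N c X + 1) + (N - mC N c X) * vf N c X
        + ∑ k ∈ range (N - 1), ccf N (mC N c X) k * ef N c X k := by
  have hmN : mC N c X ≤ N := mC_le
  zify [hmN]
  rw [← Finset.sum_range_add_sum_Ico (fun i => |Yf N c X i|) hmN]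
  have h1 : ∑ i ∈ range (mC N c X), |Yf N c X i| = ∑ i ∈ range (mC N c X), -(Yf N c X i) := by
    refine Finset.sum_congr rfl (fun i hi => ?_)
    rw [mem_range] at hi
    exact abs_of_neg ((Yf_neg_iff hX i (by omega)).mpr hi)
  have h2 : ∑ i ∈ Ico (mC N c X) N, |Yf N c X i| = ∑ i ∈ Ico (mC N c X) N, Yf N c X i := by
    refine Finset.sum_congr rfl (fun i hi => ?_)
    rw [mem_Ico] at hi
    refine abs_of_nonneg ?_
    by_contra hneg
    push_neg at hneg
    have := (Yf_neg_iff hX i hi.2).mp hneg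
    omega
  rw [h1, h2, cc_sum_split hmN]
  by_cases hm0 : mC N c X = 0
  · have hh : ∑ i ∈ range (mC N c X), -(Yf N c X i) = 0 := by rw [hm0]; simp
    by_cases hmN' : mC N c X < N
    · rw [hh, tail_eq hX hmN']
      rw [hm0]
      simp only [Nat.sub_zero]
      push_cast
      ring
    · simp [hm0, show N = 0 from by omega]
  · by_cases hmN' : mC N c X < N
    · rw [head_eq hX (by omega), tail_eq hX hmN']
      push_cast [hmN]
      ring
    · have hmN2 : mC N c X = N := by omega
      rw [head_eq hX (by omega)]
      rw [hmN2, Finset.Ico_self, sum_empty, Finset.Ico_eq_empty (by omega), sum_empty]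
      push_cast
      ring

lemma recon_lt {i : ℕ} (hi : i < mC N c X) :
    Yf N c X i = -((uf N c X : ℤ) + 1) - ∑ k ∈ Ico i (mC N c X - 1), (ef N c X k : ℤ) := by
  have hmN : mC N c X ≤ N := mC_le
  have hsum : ∑ k ∈ Ico i (mC N c X - 1), (ef N c X k : ℤ)
      = Yf N c X (mC N c X - 1) - Yf N c X i := by
    rw [← Yf_tel i (mC N c X - 1) (by omega)]
    refine Finset.sum_congr rfl (fun k hk => ?_)
    rw [mem_Ico] at hk
    rw [ef, if_neg (by omega), Df_cast hX k (by omega)]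
  have huf := uf_cast hX (show 1 ≤ mC N c X by omega)
  rw [hsum, huf]
  ring

lemma recon_ge {i : ℕ} (him : mC N c X ≤ i) (hiN : i < N) :
    Yf N c X i = (vf N c X : ℤ) + ∑ k ∈ Ico (mC N c X) i, (ef N c X k : ℤ) := by
  have hsum : ∑ k ∈ Ico (mC N c X) i, (ef N c X k : ℤ)
      = Yf N c X i - Yf N c X (mC N c X) := by
    rw [← Yf_tel (mC N c X) i him]
    refine Finset.sum_congr rfl (fun k hk => ?_)
    rw [mem_Ico] at hk
    rw [ef, if_neg (by omega), Df_cast hX k (by omega)]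
  rw [hsum, vf_cast hX (by omega)]
  ring

end

variable (N c) in
def phif (X : Fin N → ℤ) : Fin (N+1) × ℕ × ℕ × (Fin (N-1) → ℕ) :=
  (⟨mC N c X, Nat.lt_succ_of_le mC_le⟩, if mC N c X = 0 then 0 else uf N c X,
   if mC N c X = N then 0 else vf N c X, fun k => ef N c X (k : ℕ))

lemma phif_inj :
    Function.Injective (fun X : {X : Fin N → ℤ // StrictMono X} => phif N c X.1) := by
  rintro ⟨X, hX⟩ ⟨X', hX'⟩ h
  simp only [phif, Prod.mk.injEq, Fin.mk.injEq] at h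
  obtain ⟨hm, hu, hv, he⟩ := h
  have he' : ∀ k, k < N - 1 → ef N c X k = ef N c X' k := fun k hk => congrFun he ⟨k, hk⟩
  have hmN : mC N c X ≤ N := mC_le
  have hY : ∀ i, i < N → Yf N c X i = Yf N c X' i := by
    intro i hiN
    by_cases hi : i < mC N c X
    · have hm1 : mC N c X ≠ 0 := by omega
      rw [recon_lt hX hi, recon_lt hX' (by omega : i < mC N c X')]
      rw [if_neg hm1, if_neg (by omega : mC N c X' ≠ 0)] at hu
      rw [hu, hm]
      congr 1
      refine Finset.sum_congr rfl (fun k hk => ?_)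
      rw [mem_Ico] at hk
      rw [he' k (by omega)]
    · push_neg at hi
      have hmn : mC N c X ≠ N := by omega
      rw [recon_ge hX hi hiN, recon_ge hX' (by omega : mC N c X' ≤ i) hiN]
      rw [if_neg hmn, if_neg (by omega : mC N c X' ≠ N)] at hv
      rw [hv, hm]
      congr 1
      refine Finset.sum_congr rfl (fun k hk => ?_)
      rw [mem_Ico] at hk
      rw [he' k (by omega)]
  refine Subtype.ext (funext fun i => ?_)
  show X i = X' i
  have := hY i i.isLt
  rw [Yf, Yf, dif_pos i.isLt, dif_pos i.isLt] at this
  simp only [Fin.eta] at this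
  omega

/-! ### the weight function on the codomain -/

noncomputable def Ff (Q : ℝ≥0∞) (m u : ℕ) : ℝ≥0∞ :=
  if m = 0 then (if u = 0 then 1 else 0) else Q ^ (m * (u+1))
noncomputable def Gf (Q : ℝ≥0∞) (N m v : ℕ) : ℝ≥0∞ :=
  if m = N then (if v = 0 then 1 else 0) else Q ^ ((N - m) * v)
noncomputable def Hf (Q : ℝ≥0∞) (N m k n : ℕ) : ℝ≥0∞ :=
  if k + 1 = m then (if n = 0 then 1 else 0) else Q ^ (ccf N m k * n)
noncomputable def Wf (Q : ℝ≥0∞) (N : ℕ) (t : Fin (N+1) × ℕ × ℕ × (Fin (N-1) → ℕ)) : ℝ≥0∞ :=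
  Ff Q t.1 t.2.1 * (Gf Q N t.1 t.2.2.1 * ∏ k : Fin (N-1), Hf Q N t.1 k (t.2.2.2 k))

lemma tsum_Ff (Q : ℝ≥0∞) (m : ℕ) :
    ∑' u : ℕ, Ff Q m u = if m = 0 then 1 else Q^m * (1 - Q^m)⁻¹ := by
  by_cases hm : m = 0
  · simp only [Ff, hm, if_pos rfl]
    exact tsum_ite_eq 0 1
  · simp only [Ff, if_neg hm]
    have : ∀ u : ℕ, Q ^ (m * (u+1)) = Q^m * (Q^m)^u := by
      intro u
      rw [← pow_mul, ← pow_add]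
      congr 1
      ring
    simp only [this]
    rw [ENNReal.tsum_mul_left, ENNReal.tsum_geometric]

lemma tsum_Gf (Q : ℝ≥0∞) (N m : ℕ) :
    ∑' v : ℕ, Gf Q N m v = if m = N then 1 else (1 - Q^(N-m))⁻¹ := by
  by_cases hm : m = N
  · simp only [Gf, hm, if_pos rfl]
    exact tsum_ite_eq 0 1
  · simp only [Gf, if_neg hm]
    have : ∀ v : ℕ, Q ^ ((N-m) * v) = (Q^(N-m))^v := fun v => by rw [← pow_mul]
    simp only [this]
    rw [ENNReal.tsum_geometric]

lemma tsum_Hf (Q : ℝ≥0∞) (N m k : ℕ) :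
    ∑' n : ℕ, Hf Q N m k n = if k + 1 = m then 1 else (1 - Q^(ccf N m k))⁻¹ := by
  by_cases hk : k + 1 = m
  · simp only [Hf, if_pos hk]
    exact tsum_ite_eq 0 1
  · simp only [Hf, if_neg hk]
    have : ∀ n : ℕ, Q ^ (ccf N m k * n) = (Q^(ccf N m k))^n := fun n => by rw [← pow_mul]
    simp only [this]
    rw [ENNReal.tsum_geometric]

lemma tsum_Wf (Q : ℝ≥0∞) (N : ℕ) :
    ∑' t : Fin (N+1) × ℕ × ℕ × (Fin (N-1) → ℕ), Wf Q N t
      = ∑ m : Fin (N+1), (∑' u : ℕ, Ff Q (m : ℕ) u)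
          * ((∑' v : ℕ, Gf Q N (m : ℕ) v)
            * ∏ k : Fin (N-1), ∑' n : ℕ, Hf Q N (m : ℕ) (k : ℕ) n) := by
  rw [ENNReal.tsum_prod']
  rw [tsum_fintype]
  refine Finset.sum_congr rfl (fun m _ => ?_)
  rw [ENNReal.tsum_prod']
  simp only [Wf]
  calc ∑' (u : ℕ) (p : ℕ × (Fin (N-1) → ℕ)),
        Ff Q (m : ℕ) u * (Gf Q N (m : ℕ) p.1 * ∏ k : Fin (N-1), Hf Q N (m : ℕ) k (p.2 k))
      = ∑' u : ℕ, Ff Q (m : ℕ) u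
          * ∑' p : ℕ × (Fin (N-1) → ℕ),
              (Gf Q N (m : ℕ) p.1 * ∏ k : Fin (N-1), Hf Q N (m : ℕ) k (p.2 k)) := by
        refine tsum_congr (fun u => ?_)
        rw [ENNReal.tsum_mul_left]
    _ = (∑' u : ℕ, Ff Q (m : ℕ) u)
          * ∑' p : ℕ × (Fin (N-1) → ℕ),
              (Gf Q N (m : ℕ) p.1 * ∏ k : Fin (N-1), Hf Q N (m : ℕ) k (p.2 k)) :=
        ENNReal.tsum_mul_right
    _ = (∑' u : ℕ, Ff Q (m : ℕ) u)
          * ((∑' v : ℕ, Gf Q N (m : ℕ) v)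
            * ∏ k : Fin (N-1), ∑' n : ℕ, Hf Q N (m : ℕ) (k : ℕ) n) := by
        congr 1
        rw [ENNReal.tsum_prod']
        calc ∑' (v : ℕ) (e : Fin (N-1) → ℕ),
              Gf Q N (m : ℕ) v * ∏ k : Fin (N-1), Hf Q N (m : ℕ) k (e k)
            = ∑' v : ℕ, Gf Q N (m : ℕ) v * ∑' e : Fin (N-1) → ℕ,
                ∏ k : Fin (N-1), Hf Q N (m : ℕ) k (e k) := by
              refine tsum_congr (fun v => ?_)
              rw [ENNReal.tsum_mul_left]
          _ = (∑' v : ℕ, Gf Q N (m : ℕ) v) * ∑' e : Fin (N-1) → ℕ,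
                ∏ k : Fin (N-1), Hf Q N (m : ℕ) k (e k) := ENNReal.tsum_mul_right
          _ = (∑' v : ℕ, Gf Q N (m : ℕ) v)
                * ∏ k : Fin (N-1), ∑' n : ℕ, Hf Q N (m : ℕ) (k : ℕ) n := by
              rw [tsum_pi_fin (N-1) (fun k n => Hf Q N (m : ℕ) (k : ℕ) n)]

lemma per_m (Q : ℝ≥0∞) (N m : ℕ) (hm : m ≤ N) (P' : ℝ≥0∞) (hP'1 : 1 ≤ P')
    (hR : ∀ n : ℕ, ∏ j ∈ range n, (1 - Q^(j+1))⁻¹ ≤ P') :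
    (∑' u : ℕ, Ff Q m u) * ((∑' v : ℕ, Gf Q N m v)
        * ∏ k : Fin (N-1), ∑' n : ℕ, Hf Q N m (k : ℕ) n)
      ≤ Q ^ m * (P' * P') := by
  have hprod : ∏ k : Fin (N-1), ∑' n : ℕ, Hf Q N m (k : ℕ) n
      = ∏ k ∈ range (N-1), (if k + 1 = m then 1 else (1 - Q^(ccf N m k))⁻¹) := by
    rw [Fin.prod_univ_eq_prod_range (fun k => ∑' n : ℕ, Hf Q N m k n) (N-1)]
    exact Finset.prod_congr rfl (fun k _ => tsum_Hf Q N m k)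
  rw [tsum_Ff, tsum_Gf, hprod]
  by_cases hm0 : m = 0
  · subst hm0
    rw [if_pos rfl, one_mul]
    by_cases hN : N = 0
    · subst hN
      rw [if_pos rfl]
      rw [show (0:ℕ) - 1 = 0 from rfl, range_zero, prod_empty, mul_one, pow_zero, one_mul]
      calc (1 : ℝ≥0∞) = 1 * 1 := (one_mul 1).symm
        _ ≤ P' * P' := mul_le_mul' hP'1 hP'1
    · rw [if_neg (by omega : (0:ℕ) ≠ N)]
      have hsh : ∀ k ∈ range (N-1), (if k + 1 = 0 then 1 else (1 - Q^(ccf N 0 k))⁻¹)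
          = (fun j => (1 - Q^(j+1))⁻¹) ((N-1) - 1 - k) := by
        intro k hk
        rw [mem_range] at hk
        rw [if_neg (by omega), ccf, if_neg (by omega)]
        simp only []
        rw [show (N-1) - 1 - k + 1 = N - 1 - k from by omega]
      rw [Finset.prod_congr rfl hsh, Finset.prod_range_reflect (fun j => (1 - Q^(j+1))⁻¹) (N-1)]
      have : (1 - Q^(N - 0))⁻¹ * ∏ j ∈ range (N-1), (1 - Q^(j+1))⁻¹
          = ∏ j ∈ range N, (1 - Q^(j+1))⁻¹ := by
        rw [Nat.sub_zero]
        conv_rhs => rw [show N = (N-1) + 1 from by omega, Finset.prod_range_succ]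
        rw [show (N-1) + 1 = N from by omega]
        ring
      rw [this, pow_zero, one_mul]
      calc ∏ j ∈ range N, (1 - Q^(j+1))⁻¹ ≤ P' := hR N
        _ = P' * 1 := (mul_one P').symm
        _ ≤ P' * P' := mul_le_mul' le_rfl hP'1
  · rw [if_neg hm0]
    have hsplit : ∏ k ∈ range (N-1), (if k + 1 = m then 1 else (1 - Q^(ccf N m k))⁻¹)
        = (∏ k ∈ range (m-1), (if k + 1 = m then 1 else (1 - Q^(ccf N m k))⁻¹))
          * ∏ k ∈ Ico (m-1) (N-1), (if k + 1 = m then 1 else (1 - Q^(ccf N m k))⁻¹) :=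
      (Finset.prod_range_mul_prod_Ico _ (by omega : m - 1 ≤ N - 1)).symm
    have hhead : ∏ k ∈ range (m-1), (if k + 1 = m then 1 else (1 - Q^(ccf N m k))⁻¹)
        = ∏ k ∈ range (m-1), (1 - Q^(k+1))⁻¹ := by
      refine Finset.prod_congr rfl (fun k hk => ?_)
      rw [mem_range] at hk
      rw [if_neg (by omega), ccf, if_pos (by omega)]
    have hQm : (1 - Q^m)⁻¹ * ∏ k ∈ range (m-1), (1 - Q^(k+1))⁻¹
        = ∏ k ∈ range m, (1 - Q^(k+1))⁻¹ := by
      conv_rhs => rw [show m = (m-1) + 1 from by omega, Finset.prod_range_succ]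
      rw [show (m-1) + 1 = m from by omega]
      ring
    by_cases hmN : m = N
    · subst hmN
      rw [if_pos rfl]
      calc Q^m * (1 - Q^m)⁻¹ * (1 * ∏ k ∈ range (m-1), (if k + 1 = m then 1 else (1 - Q^(ccf m m k))⁻¹))
          = Q^m * ((1 - Q^m)⁻¹ * ∏ k ∈ range (m-1), (1 - Q^(k+1))⁻¹) := by
            rw [hhead]; ring
        _ = Q^m * ∏ k ∈ range m, (1 - Q^(k+1))⁻¹ := by rw [hQm]
        _ ≤ Q^m * P' := mul_le_mul' le_rfl (hR m)
        _ = Q^m * (P' * 1) := by rw [mul_one]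
        _ ≤ Q^m * (P' * P') := mul_le_mul' le_rfl (mul_le_mul' le_rfl hP'1)
    · rw [if_neg hmN]
      have hmlt : m < N := by omega
      have htail : ∏ k ∈ Ico (m-1) (N-1), (if k + 1 = m then 1 else (1 - Q^(ccf N m k))⁻¹)
          = ∏ k ∈ Ico m (N-1), (if k + 1 = m then 1 else (1 - Q^(ccf N m k))⁻¹) := by
        rw [Finset.prod_eq_prod_Ico_succ_bot (by omega : m - 1 < N - 1)]
        rw [if_pos (by omega), one_mul, show m - 1 + 1 = m from by omega]
      have htail2 : ∏ k ∈ Ico m (N-1), (if k + 1 = m then 1 else (1 - Q^(ccf N m k))⁻¹)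
          = ∏ j ∈ range (N-1-m), (1 - Q^(j+1))⁻¹ := by
        rw [Finset.prod_Ico_eq_prod_range]
        have : ∀ j ∈ range (N-1-m), (if m + j + 1 = m then 1 else (1 - Q^(ccf N m (m+j)))⁻¹)
            = (fun i => (1 - Q^(i+1))⁻¹) ((N-1-m) - 1 - j) := by
          intro j hj
          rw [mem_range] at hj
          rw [if_neg (by omega), ccf, if_neg (by omega)]
          simp only []
          rw [show (N-1-m) - 1 - j + 1 = N - 1 - (m + j) from by omega]
        rw [Finset.prod_congr rfl this,
          Finset.prod_range_reflect (fun i => (1 - Q^(i+1))⁻¹) (N-1-m)]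
      have hQNm : (1 - Q^(N-m))⁻¹ * ∏ j ∈ range (N-1-m), (1 - Q^(j+1))⁻¹
          = ∏ j ∈ range (N-m), (1 - Q^(j+1))⁻¹ := by
        conv_rhs => rw [show N - m = (N-1-m) + 1 from by omega, Finset.prod_range_succ]
        rw [show (N-1-m) + 1 = N - m from by omega]
        ring
      calc Q^m * (1 - Q^m)⁻¹ * ((1 - Q^(N-m))⁻¹
            * ∏ k ∈ range (N-1), (if k + 1 = m then 1 else (1 - Q^(ccf N m k))⁻¹))
          = Q^m * (((1 - Q^m)⁻¹ * ∏ k ∈ range (m-1), (1 - Q^(k+1))⁻¹)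
              * ((1 - Q^(N-m))⁻¹ * ∏ j ∈ range (N-1-m), (1 - Q^(j+1))⁻¹)) := by
            rw [hsplit, hhead, htail, htail2]; ring
        _ = Q^m * ((∏ k ∈ range m, (1 - Q^(k+1))⁻¹) * ∏ j ∈ range (N-m), (1 - Q^(j+1))⁻¹) := by
            rw [hQm, hQNm]
        _ ≤ Q^m * (P' * P') := mul_le_mul' le_rfl (mul_le_mul' (hR m) (hR (N-m)))

end SEDAux

/-- `L_γ := (1 − e^{−γ})^{−1} (∏_{k=1}^{∞} (1 − e^{−kγ})^{−1})²`. -/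
noncomputable def Lgamma (γ : ℝ) : ℝ :=
  (1 - Real.exp (-γ))⁻¹ * (∏' k : ℕ, (1 - Real.exp (-(((k : ℝ) + 1) * γ)))⁻¹) ^ 2

open Finset in
set_option maxHeartbeats 1000000 in
/-- the infinite product in `L_γ` converges, and the sum over all strictly
increasing `N`-tuples `X ∈ ℤ^N` of `exp(−γ ∑ᵢ |xᵢ − (c+i−1)|)` converges and is at most `L_γ`. -/
theorem sum_exp_dist_to_consecutive_le (N : ℕ) (c : ℤ) (γ : ℝ) (hγ : 0 < γ) :
    Multipliable (fun k : ℕ => (1 - Real.exp (-(((k : ℝ) + 1) * γ)))⁻¹) ∧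
    Summable (fun X : {X : Fin N → ℤ // StrictMono X} =>
      Real.exp (-γ * ∑ i, (((X.1 i - (c + (i : ℕ))).natAbs : ℝ)))) ∧
    (∑' X : {X : Fin N → ℤ // StrictMono X},
        Real.exp (-γ * ∑ i, (((X.1 i - (c + (i : ℕ))).natAbs : ℝ)))) ≤ Lgamma γ := by
  classical
  have hMult := SEDAux.mult_aux hγ
  refine ⟨hMult, ?_⟩
  set q : ℝ := Real.exp (-γ) with hqdef
  have hq0 : 0 < q := Real.exp_pos _
  have hq1 : q < 1 := Real.exp_lt_one_iff.mpr (by linarith)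
  have hfac : ∀ k : ℕ, Real.exp (-(((k : ℝ) + 1) * γ)) = q^(k+1) := by
    intro k
    rw [hqdef, ← Real.exp_nat_mul]
    congr 1
    push_cast
    ring
  have hfuneq : (fun k : ℕ => (1 - Real.exp (-(((k : ℝ) + 1) * γ)))⁻¹)
      = fun k : ℕ => (1 - q^(k+1))⁻¹ := funext fun k => by rw [hfac]
  have hMult' : Multipliable (fun k : ℕ => (1 - q^(k+1))⁻¹) := by rwa [hfuneq] at hMult
  set P : ℝ := ∏' k : ℕ, (1 - q^(k+1))⁻¹ with hPdef
  have hLg : Lgamma γ = (1 - q)⁻¹ * (P * P) := by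
    rw [Lgamma, hfuneq, ← hPdef, ← hqdef, pow_two]
  have hposj : ∀ j : ℕ, 0 < 1 - q^(j+1) := fun j => by
    have : q^(j+1) < 1 := pow_lt_one₀ hq0.le hq1 (Nat.succ_ne_zero j)
    linarith
  have hfac1 : ∀ j : ℕ, 1 ≤ (1 - q^(j+1))⁻¹ := fun j =>
    (one_le_inv₀ (hposj j)).mpr (by nlinarith [pow_pos hq0 (j+1)])
  have honeprod : ∀ s : Finset ℕ, (1:ℝ) ≤ ∏ j ∈ s, (1 - q^(j+1))⁻¹ := fun s => by
    calc (1:ℝ) = ∏ _j ∈ s, (1:ℝ) := Finset.prod_const_one.symm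
      _ ≤ ∏ j ∈ s, (1 - q^(j+1))⁻¹ :=
        Finset.prod_le_prod (fun i _ => zero_le_one) (fun i _ => hfac1 i)
  have hT : Filter.Tendsto (fun n => ∏ j ∈ range n, (1 - q^(j+1))⁻¹)
      Filter.atTop (nhds P) := by
    rw [hPdef]
    exact hMult'.hasProd.tendsto_prod_nat
  have hPn : ∀ n : ℕ, ∏ j ∈ range n, (1 - q^(j+1))⁻¹ ≤ P := by
    intro n
    refine ge_of_tendsto hT ?_
    filter_upwards [Filter.eventually_ge_atTop n] with m hm
    rw [← Finset.prod_range_mul_prod_Ico _ hm]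
    exact le_mul_of_one_le_right
      (Finset.prod_nonneg (fun i _ => inv_nonneg.mpr (hposj i).le)) (honeprod _)
  have hP1 : 1 ≤ P := by
    have := hPn 0
    simpa using this
  have hP0 : 0 ≤ P := zero_le_one.trans hP1
  have hL0 : 0 ≤ Lgamma γ := by
    rw [hLg]
    exact mul_nonneg (inv_nonneg.mpr (by linarith)) (mul_nonneg hP0 hP0)
  set Q : ℝ≥0∞ := ENNReal.ofReal q with hQdef
  set P' : ℝ≥0∞ := ENNReal.ofReal P with hP'def
  have hP'1 : 1 ≤ P' := by
    rw [hP'def, ← ENNReal.ofReal_one]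
    exact ENNReal.ofReal_le_ofReal hP1
  have hQpow : ∀ n : ℕ, Q^n = ENNReal.ofReal (q^n) := fun n => by
    rw [hQdef, ← ENNReal.ofReal_pow hq0.le]
  have hRof : ∀ j : ℕ, (1 - Q^(j+1))⁻¹ = ENNReal.ofReal ((1 - q^(j+1))⁻¹) := fun j => by
    rw [ENNReal.ofReal_inv_of_pos (hposj j), ENNReal.ofReal_sub 1 (pow_nonneg hq0.le _),
      ENNReal.ofReal_one, hQpow]
  have hRP : ∀ n : ℕ, ∏ j ∈ range n, (1 - Q^(j+1))⁻¹ ≤ P' := fun n => by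
    rw [Finset.prod_congr rfl (fun j _ => hRof j),
      ← ENNReal.ofReal_prod_of_nonneg (fun i _ => inv_nonneg.mpr (hposj i).le)]
    exact ENNReal.ofReal_le_ofReal (hPn n)
  have hfq : ∀ X : {X : Fin N → ℤ // StrictMono X},
      Real.exp (-γ * ∑ i, (((X.1 i - (c + (i : ℕ))).natAbs : ℝ)))
        = q ^ (∑ i ∈ range N, (SEDAux.Yf N c X.1 i).natAbs) := by
    intro X
    have hsum : ∑ i, (((X.1 i - (c + (i : ℕ))).natAbs : ℝ))
        = ((∑ i ∈ range N, (SEDAux.Yf N c X.1 i).natAbs : ℕ) : ℝ) := by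
      rw [Nat.cast_sum]
      rw [← Fin.sum_univ_eq_sum_range (fun n => ((SEDAux.Yf N c X.1 n).natAbs : ℝ)) N]
      refine Finset.sum_congr rfl (fun i _ => ?_)
      congr 2
      rw [SEDAux.Yf, dif_pos i.isLt]
      simp only [Fin.eta]
      ring
    rw [hsum, mul_comm, Real.exp_nat_mul, ← hqdef]
  have hWeq : ∀ X : {X : Fin N → ℤ // StrictMono X},
      Q ^ (∑ i ∈ range N, (SEDAux.Yf N c X.1 i).natAbs)
        = SEDAux.Wf Q N (SEDAux.phif N c X.1) := by
    intro X
    have h1 : SEDAux.Wf Q N (SEDAux.phif N c X.1)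
        = Q ^ (SEDAux.mC N c X.1 * (SEDAux.uf N c X.1 + 1))
          * (Q ^ ((N - SEDAux.mC N c X.1) * SEDAux.vf N c X.1)
            * ∏ k : Fin (N-1),
                Q ^ (SEDAux.ccf N (SEDAux.mC N c X.1) (k:ℕ) * SEDAux.ef N c X.1 (k:ℕ))) := by
      simp only [SEDAux.Wf, SEDAux.phif]
      congr 1
      · by_cases h : SEDAux.mC N c X.1 = 0
        · simp [SEDAux.Ff, h]
        · simp [SEDAux.Ff, h]
      congr 1
      · by_cases h : SEDAux.mC N c X.1 = N
        · simp [SEDAux.Gf, h]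
        · simp [SEDAux.Gf, h]
      · refine Finset.prod_congr rfl (fun k _ => ?_)
        by_cases h : (k:ℕ) + 1 = SEDAux.mC N c X.1
        · simp [SEDAux.Hf, SEDAux.ef, h]
        · simp [SEDAux.Hf, SEDAux.ef, h]
    rw [SEDAux.exponent_eq X.2, h1, pow_add, pow_add, mul_assoc]
    congr 2
    rw [← Fin.sum_univ_eq_sum_range
      (fun k => SEDAux.ccf N (SEDAux.mC N c X.1) k * SEDAux.ef N c X.1 k) (N-1)]
    rw [← Finset.prod_pow_eq_pow_sum]
  have hle : (∑' X : {X : Fin N → ℤ // StrictMono X},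
        Q ^ (∑ i ∈ range N, (SEDAux.Yf N c X.1 i).natAbs))
      ≤ ENNReal.ofReal (Lgamma γ) := by
    calc (∑' X : {X : Fin N → ℤ // StrictMono X},
          Q ^ (∑ i ∈ range N, (SEDAux.Yf N c X.1 i).natAbs))
        = ∑' X : {X : Fin N → ℤ // StrictMono X}, SEDAux.Wf Q N (SEDAux.phif N c X.1) :=
          tsum_congr hWeq
      _ ≤ ∑' t : Fin (N+1) × ℕ × ℕ × (Fin (N-1) → ℕ), SEDAux.Wf Q N t :=
          ENNReal.tsum_comp_le_tsum_of_injective SEDAux.phif_inj _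
      _ = ∑ m : Fin (N+1), (∑' u : ℕ, SEDAux.Ff Q (m : ℕ) u)
            * ((∑' v : ℕ, SEDAux.Gf Q N (m : ℕ) v)
              * ∏ k : Fin (N-1), ∑' n : ℕ, SEDAux.Hf Q N (m : ℕ) (k : ℕ) n) :=
          SEDAux.tsum_Wf Q N
      _ ≤ ∑ m : Fin (N+1), Q^(m:ℕ) * (P' * P') :=
          Finset.sum_le_sum (fun m _ =>
            SEDAux.per_m Q N (m : ℕ) (Nat.lt_succ_iff.mp m.isLt) P' hP'1 hRP)
      _ = (∑ m ∈ range (N+1), Q^m) * (P' * P') := by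
          rw [← Finset.sum_mul, Fin.sum_univ_eq_sum_range (fun m => Q^m) (N+1)]
      _ ≤ (∑' m : ℕ, Q^m) * (P' * P') :=
          mul_le_mul_left (ENNReal.sum_le_tsum (range (N+1))) _
      _ = (1 - Q)⁻¹ * (P' * P') := by rw [ENNReal.tsum_geometric]
      _ = ENNReal.ofReal (Lgamma γ) := by
          rw [hLg, ENNReal.ofReal_mul (inv_nonneg.mpr (by linarith : (0:ℝ) ≤ 1 - q)),
            ENNReal.ofReal_mul hP0]
          rw [ENNReal.ofReal_inv_of_pos (by linarith : (0:ℝ) < 1 - q),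
            ENNReal.ofReal_sub 1 hq0.le, ENNReal.ofReal_one, ← hQdef, ← hP'def]
  have htop : (∑' X : {X : Fin N → ℤ // StrictMono X},
      Q ^ (∑ i ∈ range N, (SEDAux.Yf N c X.1 i).natAbs)) ≠ ⊤ :=
    ne_top_of_le_ne_top ENNReal.ofReal_ne_top hle
  have hne : ∀ X : {X : Fin N → ℤ // StrictMono X},
      Q ^ (∑ i ∈ range N, (SEDAux.Yf N c X.1 i).natAbs) ≠ ⊤ := fun X => by
    rw [hQpow]
    exact ENNReal.ofReal_ne_top
  have htoReal : ∀ X : {X : Fin N → ℤ // StrictMono X},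
      (Q ^ (∑ i ∈ range N, (SEDAux.Yf N c X.1 i).natAbs)).toReal
        = q ^ (∑ i ∈ range N, (SEDAux.Yf N c X.1 i).natAbs) := fun X => by
    rw [hQpow, ENNReal.toReal_ofReal (pow_nonneg hq0.le _)]
  have hfun2 : (fun X : {X : Fin N → ℤ // StrictMono X} =>
        Real.exp (-γ * ∑ i, (((X.1 i - (c + (i : ℕ))).natAbs : ℝ))))
      = fun X => (Q ^ (∑ i ∈ range N, (SEDAux.Yf N c X.1 i).natAbs)).toReal :=
    funext fun X => by rw [hfq X, htoReal X]
  constructor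
  · rw [hfun2]
    exact ENNReal.summable_toReal htop
  · calc (∑' X : {X : Fin N → ℤ // StrictMono X},
          Real.exp (-γ * ∑ i, (((X.1 i - (c + (i : ℕ))).natAbs : ℝ))))
        = ∑' X : {X : Fin N → ℤ // StrictMono X},
            (Q ^ (∑ i ∈ range N, (SEDAux.Yf N c X.1 i).natAbs)).toReal := by rw [hfun2]
      _ = (∑' X : {X : Fin N → ℤ // StrictMono X},
            Q ^ (∑ i ∈ range N, (SEDAux.Yf N c X.1 i).natAbs)).toReal :=
          (ENNReal.tsum_toReal_eq hne).symm
      _ ≤ Lgamma γ := ENNReal.toReal_le_of_le_ofReal hL0 hle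
end

section
/- For every m ∈ M_L, one has J · B(m) ≤ V(m). -/
/-- Membership in `M_L`: functions `Λ_L → {0,…,2J}` (vanishing outside `Λ_L = {1,…,L}`). -/
def memML (twoJ L : ℕ) (m : ℕ → ℕ) : Prop :=
  (∀ j, m j ≤ twoJ) ∧ (∀ j, j ∉ Finset.Icc 1 L → m j = 0)

/-- The block count
`B(m) = #{i ∈ {1,…,L−1} : m(i)+m(i+1) ∉ {0, 4J}} + (2 − δ_{m(1),0} − δ_{m(L),0})`. -/
def blockCount (twoJ L : ℕ) (m : ℕ → ℕ) : ℕ :=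
  ((Finset.Icc 1 (L - 1)).filter
      (fun i => ¬(m i + m (i + 1) = 0 ∨ m i + m (i + 1) = 2 * twoJ))).card
    + (2 - (if m 1 = 0 then 1 else 0) - (if m L = 0 then 1 else 0))

lemma edge_nonneg (T a b : ℕ) (ha : a ≤ T) (hb : b ≤ T) :
    (0:ℝ) ≤ (T:ℝ)/2 * ((a:ℝ) + (b:ℝ)) - (a:ℝ) * (b:ℝ) := by
  have ha' : (a:ℝ) ≤ T := by exact_mod_cast ha
  have hb' : (b:ℝ) ≤ T := by exact_mod_cast hb
  have h1 : (0:ℝ) ≤ ((T:ℝ) - a) * b :=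
    mul_nonneg (by linarith) (Nat.cast_nonneg b)
  have h2 : (0:ℝ) ≤ ((T:ℝ) - b) * a :=
    mul_nonneg (by linarith) (Nat.cast_nonneg a)
  nlinarith

lemma edge_ge (T a b : ℕ) (ha : a ≤ T) (hb : b ≤ T)
    (h : ¬(a + b = 0 ∨ a + b = 2 * T)) :
    (T:ℝ)/2 ≤ (T:ℝ)/2 * ((a:ℝ) + (b:ℝ)) - (a:ℝ) * (b:ℝ) := by
  push_neg at h
  obtain ⟨h0, h2T⟩ := h
  have ha' : (a:ℝ) ≤ T := by exact_mod_cast ha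
  have hb' : (b:ℝ) ≤ T := by exact_mod_cast hb
  rcases Nat.eq_zero_or_pos a with rfl | hapos
  · have hb1 : 1 ≤ b := Nat.pos_of_ne_zero (by simpa using h0)
    have hb1' : (1:ℝ) ≤ b := by exact_mod_cast hb1
    have hT : (0:ℝ) ≤ T := Nat.cast_nonneg T
    simp only [Nat.cast_zero]
    nlinarith
  · rcases eq_or_ne a T with haT | haT
    · have hb1 : b + 1 ≤ T := by omega
      have hb1' : (b:ℝ) + 1 ≤ T := by exact_mod_cast hb1
      have haR : (a:ℝ) = T := by exact_mod_cast haT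
      have hT : (0:ℝ) ≤ T := Nat.cast_nonneg T
      nlinarith
    · have h1a : 1 ≤ a := hapos
      have haT1 : a + 1 ≤ T := by omega
      have h1a' : (1:ℝ) ≤ a := by exact_mod_cast h1a
      have haT1' : (a:ℝ) + 1 ≤ T := by exact_mod_cast haT1
      have hp1 : (0:ℝ) ≤ ((a:ℝ) - 1) * ((T:ℝ) - b) :=
        mul_nonneg (by linarith) (by linarith)
      have hp2 : (0:ℝ) ≤ (b:ℝ) * ((T:ℝ) - 1 - a) :=
        mul_nonneg (Nat.cast_nonneg b) (by linarith)
      nlinarith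

/-- for every `m ∈ M_L`, one has `J · B(m) ≤ V(m)`. -/
theorem blockCount_le_potential (twoJ L : ℕ) (h2J : 0 < twoJ) (hL : 2 ≤ L)
    (m : ℕ → ℕ) (hm : memML twoJ L m) :
    (twoJ : ℝ) / 2 * (blockCount twoJ L m : ℝ) ≤ potV twoJ L m := by
  obtain ⟨hmle, _⟩ := hm
  set T := twoJ
  have hT2 : (0:ℝ) ≤ (T:ℝ)/2 := by positivity
  -- sum part
  have hsum : (T:ℝ)/2 *
      (((Finset.Icc 1 (L - 1)).filter
        (fun i => ¬(m i + m (i + 1) = 0 ∨ m i + m (i + 1) = 2 * T))).card : ℝ)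
      ≤ ∑ j ∈ Finset.Icc 1 (L - 1),
        ((T : ℝ) / 2 * ((m j : ℝ) + (m (j + 1) : ℝ)) - (m j : ℝ) * (m (j + 1) : ℝ)) := by
    rw [Finset.card_filter]
    push_cast
    rw [Finset.mul_sum]
    apply Finset.sum_le_sum
    intro i _
    by_cases h : m i + m (i + 1) = 0 ∨ m i + m (i + 1) = 2 * T
    · rw [if_neg (not_not_intro h), mul_zero]
      exact edge_nonneg T (m i) (m (i+1)) (hmle i) (hmle (i+1))
    · rw [if_pos h, mul_one]
      exact edge_ge T (m i) (m (i+1)) (hmle i) (hmle (i+1)) h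
  -- boundary part
  have hbdy : (T:ℝ)/2 *
      (((2 - (if m 1 = 0 then 1 else 0) - (if m L = 0 then 1 else 0)) : ℕ) : ℝ)
      ≤ (T : ℝ) / 2 * ((m 1 : ℝ) + (m L : ℝ)) := by
    have h1 : (if m 1 = 0 then (1:ℝ) else 0) + (m 1 : ℝ) ≥ 1 := by
      split_ifs with h
      · simp
      · have : 1 ≤ m 1 := Nat.pos_of_ne_zero h
        have : (1:ℝ) ≤ m 1 := by exact_mod_cast this
        linarith
    have hL1 : (if m L = 0 then (1:ℝ) else 0) + (m L : ℝ) ≥ 1 := by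
      split_ifs with h
      · simp
      · have : 1 ≤ m L := Nat.pos_of_ne_zero h
        have : (1:ℝ) ≤ m L := by exact_mod_cast this
        linarith
    have hcast : (((2 - (if m 1 = 0 then 1 else 0) - (if m L = 0 then 1 else 0)) : ℕ) : ℝ)
        = 2 - (if m 1 = 0 then (1:ℝ) else 0) - (if m L = 0 then (1:ℝ) else 0) := by
      split_ifs <;> norm_num
    rw [hcast]
    apply mul_le_mul_of_nonneg_left _ hT2
    linarith
  unfold potV blockCount
  push_cast [Nat.cast_add]
  rw [mul_add]
  exact add_le_add hsum hbdy
end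

section
/- Let m ∈ M_L be nonzero with B(m) ≤ R for some integer R ≥ 2. Then there exist τ ≤ R − 1 building blocks k⁽¹⁾, …, k⁽ᵗ⁾ ∈ K_L with pairwise disjoint supports such that m = k⁽¹⁾ + ⋯ + k⁽ᵗ⁾. -/
/-- Membership in the set `K_L` of building blocks: either a single occupied column, or a
rectangular block where every site of a discrete interval `[α,β] ⊆ Λ_L` carries exactly
`2J` particles. -/
def memKL (twoJ L : ℕ) (m : ℕ → ℕ) : Prop :=
  memML twoJ L m ∧
    ((∃ j ∈ Finset.Icc 1 L, m j ≠ 0 ∧ ∀ i, i ≠ j → m i = 0) ∨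
     (∃ α ∈ Finset.Icc 1 L, ∃ β ∈ Finset.Icc 1 L, α ≤ β ∧
        ∀ i, m i = if α ≤ i ∧ i ≤ β then twoJ else 0))

/-- A nonzero `m ∈ M_L` has a smallest and a largest occupied site. -/
lemma exists_bounds (twoJ L : ℕ) (m : ℕ → ℕ) (hm : memML twoJ L m) (hm0 : m ≠ 0) :
    ∃ q b, 1 ≤ q ∧ q ≤ b ∧ b ≤ L ∧ m q ≠ 0 ∧ m b ≠ 0 ∧
      (∀ i, i < q → m i = 0) ∧ (∀ i, b < i → m i = 0) := by
  obtain ⟨j, hj⟩ := Function.ne_iff.mp hm0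
  simp only [Pi.zero_apply] at hj
  have hjmem : j ∈ Finset.Icc 1 L := by
    by_contra h; exact hj (hm.2 j h)
  rw [Finset.mem_Icc] at hjmem
  have hex : ∃ i, m i ≠ 0 := ⟨j, hj⟩
  set b := Nat.findGreatest (fun i => m i ≠ 0) L with hbdef
  have hmb : m b ≠ 0 := Nat.findGreatest_spec (P := fun i => m i ≠ 0) hjmem.2 hj
  have hbL : b ≤ L := Nat.findGreatest_le L
  have hb1 : 1 ≤ b := le_trans hjmem.1 (Nat.le_findGreatest hjmem.2 hj)
  have hgt : ∀ i, b < i → m i = 0 := by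
    intro i hi
    by_cases hiL : i ≤ L
    · by_contra h; exact (Nat.findGreatest_is_greatest hi hiL) h
    · exact hm.2 i (by simp only [Finset.mem_Icc]; omega)
  set q := Nat.find hex with hqdef
  have hmq : m q ≠ 0 := Nat.find_spec hex
  have hqb : q ≤ b := Nat.find_le hmb
  have hq1 : 1 ≤ q := by
    rcases Nat.eq_zero_or_pos q with h | h
    · exact absurd (hm.2 0 (by simp)) (h ▸ hmq)
    · exact h
  have hlt : ∀ i, i < q → m i = 0 := by
    intro i hi
    by_contra h; exact Nat.find_min hex hi h
  exact ⟨q, b, hq1, hqb, hbL, hmq, hmb, hlt, hgt⟩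

/-- Any nonzero `m ∈ M_L` has block count at least `2`. -/
lemma two_le_blockCount (twoJ L : ℕ) (h2J : 0 < twoJ) (hL : 2 ≤ L)
    (m : ℕ → ℕ) (hm : memML twoJ L m) (hm0 : m ≠ 0) :
    2 ≤ blockCount twoJ L m := by
  obtain ⟨q, b, hq1, hqb, hbL, hmq, hmb, hlt, hgt⟩ := exists_bounds twoJ L m hm hm0
  set F := (Finset.Icc 1 (L - 1)).filter
      (fun i => ¬(m i + m (i + 1) = 0 ∨ m i + m (i + 1) = 2 * twoJ)) with hF
  have hbm : blockCount twoJ L m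
      = F.card + (2 - (if m 1 = 0 then 1 else 0) - (if m L = 0 then 1 else 0)) := rfl
  have hqF : m 1 = 0 → q - 1 ∈ F := by
    intro h1
    have hq2 : 2 ≤ q := by
      by_contra h
      have hq : q = 1 := by omega
      rw [hq] at hmq
      exact hmq h1
    have hq' : q - 1 + 1 = q := by omega
    rw [hF, Finset.mem_filter, Finset.mem_Icc, hq']
    have h0 : m (q - 1) = 0 := hlt _ (by omega)
    have hb1 : m q ≤ twoJ := hm.1 q
    exact ⟨⟨by omega, by omega⟩, by omega⟩
  have hbF : m L = 0 → b ∈ F := by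
    intro hLz
    have hbLlt : b < L := by
      rcases eq_or_lt_of_le hbL with h | h
      · exact absurd (h ▸ hmb) (fun hh => hh hLz)
      · exact h
    have h0 : m (b + 1) = 0 := hgt _ (by omega)
    have hb1 : m b ≤ twoJ := hm.1 b
    rw [hF, Finset.mem_filter, Finset.mem_Icc]
    exact ⟨⟨by omega, by omega⟩, by omega⟩
  rw [hbm]
  by_cases h1 : m 1 = 0 <;> by_cases hL' : m L = 0
  · have hcard : 1 < F.card := by
      refine Finset.one_lt_card.mpr ⟨q - 1, hqF h1, b, hbF hL', by omega⟩
    simp only [h1, hL', if_pos]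
    omega
  · have hcard : 0 < F.card := Finset.card_pos.mpr ⟨q - 1, hqF h1⟩
    simp only [h1, hL', if_pos, if_neg, not_false_iff]
    omega
  · have hcard : 0 < F.card := Finset.card_pos.mpr ⟨b, hbF hL'⟩
    simp only [h1, hL', if_pos, if_neg, not_false_iff]
    omega
  · simp only [h1, hL', if_neg, not_false_iff]
    omega

/-- Removing the rightmost building block decreases the block count. -/
lemma block_drop (twoJ L : ℕ) (h2J : 0 < twoJ)
    (m : ℕ → ℕ) (hm : memML twoJ L m) (a b : ℕ)
    (ha1 : 1 ≤ a) (hab : a ≤ b) (hbL : b ≤ L) (hmb : m b ≠ 0)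
    (hgt : ∀ i, b < i → m i = 0)
    (hedge : m (a - 1) ≠ twoJ ∨ m a ≠ twoJ) :
    blockCount twoJ L (fun i => if a ≤ i ∧ i ≤ b then 0 else m i) + 1
      ≤ blockCount twoJ L m := by
  set m' : ℕ → ℕ := fun i => if a ≤ i ∧ i ≤ b then 0 else m i with hm'def
  set F := (Finset.Icc 1 (L - 1)).filter
      (fun i => ¬(m i + m (i + 1) = 0 ∨ m i + m (i + 1) = 2 * twoJ)) with hF
  set F' := (Finset.Icc 1 (L - 1)).filter
      (fun i => ¬(m' i + m' (i + 1) = 0 ∨ m' i + m' (i + 1) = 2 * twoJ)) with hF'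
  have hbm : blockCount twoJ L m
      = F.card + (2 - (if m 1 = 0 then 1 else 0) - (if m L = 0 then 1 else 0)) := rfl
  have hbm' : blockCount twoJ L m'
      = F'.card + (2 - (if m' 1 = 0 then 1 else 0) - (if m' L = 0 then 1 else 0)) := rfl
  have hm'val : ∀ i, a ≤ i → i ≤ b → m' i = 0 := by
    intro i h1 h2; simp only [hm'def]; rw [if_pos ⟨h1, h2⟩]
  have hm'val2 : ∀ i, ¬(a ≤ i ∧ i ≤ b) → m' i = m i := by
    intro i h; simp only [hm'def]; rw [if_neg h]
  have hsub : ∀ i ∈ F', i ∈ F ∧ i < a := by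
    intro i hi
    rw [hF', Finset.mem_filter, Finset.mem_Icc] at hi
    obtain ⟨⟨hi1, hiL⟩, hcond⟩ := hi
    rcases lt_or_ge i a with hia | hia
    · have hmi : m' i = m i := hm'val2 i (by omega)
      refine ⟨?_, hia⟩
      rw [hF, Finset.mem_filter, Finset.mem_Icc]
      refine ⟨⟨hi1, hiL⟩, ?_⟩
      rcases Nat.lt_or_ge (i + 1) a with hia1 | hia1
      · have hmi1 : m' (i + 1) = m (i + 1) := hm'val2 _ (by omega)
        rw [hmi, hmi1] at hcond
        exact hcond
      · have ha' : i + 1 = a := by omega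
        have hmi1 : m' (i + 1) = 0 := hm'val _ (by omega) (by omega)
        rw [hmi, hmi1] at hcond
        have hedge' : m i ≠ twoJ ∨ m (i + 1) ≠ twoJ := by
          rw [show i + 1 = a by omega, show i = a - 1 by omega]
          exact hedge
        have hb1 : m i ≤ twoJ := hm.1 i
        have hb2 : m (i + 1) ≤ twoJ := hm.1 (i + 1)
        omega
    · exfalso
      have h0 : m' i = 0 := by
        by_cases hib : i ≤ b
        · exact hm'val i hia hib
        · rw [hm'val2 i (by omega)]; exact hgt i (by omega)
      have h1 : m' (i + 1) = 0 := by
        by_cases hib : i + 1 ≤ b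
        · exact hm'val _ (by omega) hib
        · rw [hm'val2 _ (by omega)]; exact hgt _ (by omega)
      rw [h0, h1] at hcond
      omega
  have hm'1 : m 1 = 0 → m' 1 = 0 := by
    intro h; simp only [hm'def]; split
    · rfl
    · exact h
  have hd1 : (if m 1 = 0 then (1 : ℕ) else 0) ≤ (if m' 1 = 0 then 1 else 0) := by
    split_ifs with u v
    · omega
    · exact absurd (hm'1 u) v
    · omega
    · omega
  have hd1' : (if m' 1 = 0 then (1 : ℕ) else 0) ≤ 1 := by split <;> omega
  rcases eq_or_lt_of_le hbL with hbeq | hblt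
  · -- b = L
    have hc : F'.card ≤ F.card := Finset.card_le_card (fun i hi => (hsub i hi).1)
    have e1 : m' L = 0 := hm'val L (by omega) (by omega)
    have eL : ¬ m L = 0 := by rw [← hbeq]; exact hmb
    rw [hbm, hbm', if_pos e1, if_neg eL]
    omega
  · -- b < L
    have hbF : b ∈ F := by
      rw [hF, Finset.mem_filter, Finset.mem_Icc]
      have h0 : m (b + 1) = 0 := hgt _ (by omega)
      have hb1 : m b ≤ twoJ := hm.1 b
      exact ⟨⟨by omega, by omega⟩, by omega⟩
    have hsub' : F' ⊆ F.erase b := by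
      intro i hi
      exact Finset.mem_erase.mpr ⟨by have := (hsub i hi).2; omega, (hsub i hi).1⟩
    have hc : F'.card + 1 ≤ F.card := by
      have h1 := Finset.card_le_card hsub'
      rw [Finset.card_erase_of_mem hbF] at h1
      have hpos : 0 < F.card := Finset.card_pos.mpr ⟨b, hbF⟩
      omega
    have eL : m' L = m L := hm'val2 L (by omega)
    rw [hbm, hbm', eL]
    omega

/-- Main induction for the decomposition theorem. -/
lemma decomposition_aux (twoJ L : ℕ) (h2J : 0 < twoJ) (hL : 2 ≤ L) :
    ∀ R, 2 ≤ R → ∀ m : ℕ → ℕ, memML twoJ L m → m ≠ 0 → blockCount twoJ L m ≤ R →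
    ∃ (τ : ℕ) (kk : Fin τ → (ℕ → ℕ)), τ ≤ R - 1 ∧
      (∀ i, memKL twoJ L (kk i)) ∧
      (∀ i i', i ≠ i' → ∀ x, kk i x = 0 ∨ kk i' x = 0) ∧
      (∀ x, m x = ∑ i, kk i x) := by
  intro R
  induction R using Nat.strong_induction_on with
  | _ R ih =>
  intro hR m hm hm0 hB
  obtain ⟨q, b, hq1, hqb, hbL, hmq, hmb, hltq, hgt⟩ := exists_bounds twoJ L m hm hm0
  have key : ∃ a, 1 ≤ a ∧ a ≤ b ∧ (m (a - 1) ≠ twoJ ∨ m a ≠ twoJ) ∧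
      (a < b → ∀ i, a ≤ i → i ≤ b → m i = twoJ) := by
    by_cases hb2J : m b = twoJ
    · set c := Nat.findGreatest (fun i => m i ≠ twoJ) b with hcdef
      have hc_spec : m c ≠ twoJ := by
        refine Nat.findGreatest_spec (P := fun i => m i ≠ twoJ) (Nat.zero_le b) ?_
        show m 0 ≠ twoJ
        rw [hm.2 0 (by simp)]
        omega
      have hcb : c ≤ b := Nat.findGreatest_le b
      have hclt : c < b := lt_of_le_of_ne hcb (fun h => hc_spec (h ▸ hb2J))
      have hrun : ∀ i, c < i → i ≤ b → m i = twoJ := by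
        intro i h1 h2
        by_contra h
        exact (Nat.findGreatest_is_greatest h1 h2) h
      refine ⟨c + 1, by omega, by omega, Or.inl (by simpa using hc_spec), ?_⟩
      intro _ i h1 h2
      exact hrun i (by omega) h2
    · exact ⟨b, by omega, le_refl b, Or.inr hb2J, fun h => absurd h (lt_irrefl b)⟩
  obtain ⟨a, ha1, hab, hedge, hrun⟩ := key
  set k : ℕ → ℕ := fun i => if a ≤ i ∧ i ≤ b then m i else 0 with hkdef
  set m' : ℕ → ℕ := fun i => if a ≤ i ∧ i ≤ b then 0 else m i with hm'def
  have heq : ∀ x, m x = k x + m' x := by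
    intro x
    simp only [hkdef, hm'def]
    split <;> omega
  have hkML : memML twoJ L k := by
    constructor
    · intro j
      simp only [hkdef]
      split
      · exact hm.1 j
      · exact Nat.zero_le _
    · intro j hj
      simp only [hkdef]
      have hnc : ¬(a ≤ j ∧ j ≤ b) := by
        intro ⟨h1, h2⟩
        exact hj (Finset.mem_Icc.mpr ⟨by omega, by omega⟩)
      rw [if_neg hnc]
  have hkK : memKL twoJ L k := by
    refine ⟨hkML, ?_⟩
    rcases eq_or_lt_of_le hab with haeq | halt
    · left
      refine ⟨b, Finset.mem_Icc.mpr ⟨by omega, hbL⟩, ?_, ?_⟩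
      · simp only [hkdef]
        rw [if_pos ⟨by omega, le_refl b⟩]
        exact hmb
      · intro i hi
        simp only [hkdef]
        rw [if_neg]
        omega
    · right
      refine ⟨a, Finset.mem_Icc.mpr ⟨ha1, by omega⟩, b, Finset.mem_Icc.mpr ⟨by omega, hbL⟩,
        hab, ?_⟩
      intro i
      simp only [hkdef]
      by_cases h : a ≤ i ∧ i ≤ b
      · rw [if_pos h, if_pos h]
        exact hrun halt i h.1 h.2
      · rw [if_neg h, if_neg h]
  have hm'ML : memML twoJ L m' := by
    constructor
    · intro j
      simp only [hm'def]
      split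
      · exact Nat.zero_le _
      · exact hm.1 j
    · intro j hj
      simp only [hm'def]
      split
      · rfl
      · exact hm.2 j hj
  by_cases hm'0 : m' = 0
  · refine ⟨1, fun _ => k, by omega, fun _ => hkK, ?_, ?_⟩
    · intro i i' hne
      exact absurd (Subsingleton.elim i i') hne
    · intro x
      rw [Fin.sum_univ_one]
      have hz : m' x = 0 := by rw [hm'0]; rfl
      rw [heq x, hz, add_zero]
  · have hdrop := block_drop twoJ L h2J m hm a b ha1 hab hbL hmb hgt hedge
    rw [← hm'def] at hdrop
    have h2B := two_le_blockCount twoJ L h2J hL m' hm'ML hm'0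
    obtain ⟨τ', kk', hτ', hK', hD', hS'⟩ :=
      ih (R - 1) (by omega) (by omega) m' hm'ML hm'0 (by omega)
    refine ⟨τ' + 1, Fin.cons k kk', by omega, ?_, ?_, ?_⟩
    · intro i
      rcases Fin.eq_zero_or_eq_succ i with rfl | ⟨j', rfl⟩
      · simpa only [Fin.cons_zero] using hkK
      · simpa only [Fin.cons_succ] using hK' j'
    · intro i i' hne x
      have hkey : ∀ j' : Fin τ', k x ≠ 0 → kk' j' x = 0 := by
        intro j' hkx
        have hx : a ≤ x ∧ x ≤ b := by
          by_contra h
          apply hkx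
          simp only [hkdef]
          rw [if_neg h]
        have hm'x : m' x = 0 := by
          simp only [hm'def]
          rw [if_pos hx]
        have hsum := hS' x
        rw [hm'x] at hsum
        exact (Finset.sum_eq_zero_iff.mp hsum.symm) j' (Finset.mem_univ _)
      rcases Fin.eq_zero_or_eq_succ i with rfl | ⟨j, rfl⟩ <;>
        rcases Fin.eq_zero_or_eq_succ i' with rfl | ⟨j', rfl⟩
      · exact absurd rfl hne
      · simp only [Fin.cons_zero, Fin.cons_succ]
        by_cases hkx : k x = 0
        · exact Or.inl hkx
        · exact Or.inr (hkey j' hkx)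
      · simp only [Fin.cons_zero, Fin.cons_succ]
        by_cases hkx : k x = 0
        · exact Or.inr hkx
        · exact Or.inl (hkey j hkx)
      · simp only [Fin.cons_succ]
        exact hD' j j' (fun h => hne (congrArg Fin.succ h)) x
    · intro x
      rw [Fin.sum_univ_succ]
      simp only [Fin.cons_zero, Fin.cons_succ]
      rw [heq x, hS' x]

/-- a nonzero `m ∈ M_L` with `B(m) ≤ R` (`R ≥ 2`) decomposes into `τ ≤ R − 1`
building blocks with pairwise disjoint supports. -/
theorem decomposition_into_building_blocks (twoJ L R : ℕ) (h2J : 0 < twoJ) (hL : 2 ≤ L)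
    (hR : 2 ≤ R) (m : ℕ → ℕ) (hm : memML twoJ L m) (hm0 : m ≠ 0)
    (hB : blockCount twoJ L m ≤ R) :
    ∃ (τ : ℕ) (kk : Fin τ → (ℕ → ℕ)), τ ≤ R - 1 ∧
      (∀ i, memKL twoJ L (kk i)) ∧
      (∀ i i', i ≠ i' → ∀ x, kk i x = 0 ∨ kk i' x = 0) ∧
      (∀ x, m x = ∑ i, kk i x) := by
  exact decomposition_aux twoJ L h2J hL R hR m hm hm0 hB
end
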